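/- arXiv:2511.14757 — 4 statements merged into one kernel-verified Lean document; each statement's English description precedes it below -/
import Mathlib

section
/- Let S and E be Polish spaces and T : S → E continuous. For each η ∈ (0,1) let π_η be a Borel probability measure on S, let m_η be the pushforward of π_η under T, and let Q_η be a Borel measurable kernel from E to probability measures on S such that π_η(A) = ∫_E Q_η(z)(A) m_η(dz) for every Borel A ⊆ S and such that Q_η(z)({s ∈ S : T(s) = z}) = 1 for every z ∈ E. Assume: (i) there is a compact K ⊆ E with m_η(K) = 1 for all η; (ii) {m_η}_{η∈(0,1)} satisfies the Laplace principle on E with a good rate function I_S : E → [0,∞]; (iii) there is a family of functions I^z : S → [0,∞] (z ∈ E) with I^z(s) = +∞ whenever T(s) ≠ z, such that for every bounded continuous F : S → ℝ the function F̃(z) := inf_{s∈S} [F(s) + I^z(s)] is bounded and continuous on E, and sup_{z∈K} | −η · log ∫_S exp(−F(s)/η) Q_η(z)(ds) − F̃(z) | → 0 as η ↓ 0. Then {π_η}_{η∈(0,1)} satisfies the Laplace principle on S with rate function I_D(s) := I_S(T(s)) + I^{T(s)}(s). (The transfer mechanism proved in Section 4, from which Theorem 1.2 follows.) -/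
open MeasureTheory Filter Set
open scoped ENNReal NNReal Classical

noncomputable section

/-- A family `(μ_η)_{η∈(0,1)}` satisfies the Laplace principle with rate function
`I : X → [0,∞]` if for every bounded continuous `F : X → ℝ`,
`lim_{η↓0} −η log ∫ exp(−F/η) dμ_η = inf_x [F(x) + I(x)]` (the possibly infinite
infimum being taken in the extended reals). -/
def LaplacePrinciple {X : Type*} [TopologicalSpace X] [MeasurableSpace X]
    (μ : ℝ → Measure X) (I : X → ℝ≥0∞) : Prop :=
  ∀ F : X → ℝ, Continuous F → (∃ B, ∀ x, |F x| ≤ B) →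
    Tendsto (fun η : ℝ => ((-η * Real.log (∫ x, Real.exp (-F x / η) ∂(μ η)) : ℝ) : EReal))
      (nhdsWithin 0 (Set.Ioi 0))
      (nhds (⨅ x, ((F x : EReal) + (I x : EReal))))

/-- A rate function is good if all its sublevel sets are compact. -/
def GoodRate {X : Type*} [TopologicalSpace X] (I : X → ℝ≥0∞) : Prop :=
  ∀ a : ℝ≥0, IsCompact {x | I x ≤ (a : ℝ≥0∞)}

/-- Adding a real constant commutes with infima in `EReal`. -/
lemma my_iInf_add_coe {ι : Sort*} (f : ι → EReal) (c : ℝ) :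
    (⨅ i, f i) + (c : EReal) = ⨅ i, (f i + (c : EReal)) := by
  apply le_antisymm
  · exact le_iInf fun i => add_le_add_left (iInf_le f i) _
  · have h : ∀ i, (⨅ i, f i + (c : EReal)) - (c : EReal) ≤ f i := by
      intro i
      rw [EReal.sub_le_iff_le_add (.inl (EReal.coe_ne_bot c)) (.inl (EReal.coe_ne_top c))]
      exact iInf_le _ i
    have h2 : (⨅ i, f i + (c : EReal)) - (c : EReal) ≤ ⨅ i, f i := le_iInf h
    rwa [EReal.sub_le_iff_le_add (.inl (EReal.coe_ne_bot c)) (.inl (EReal.coe_ne_top c))] at h2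

/-- Adding an `ℝ≥0∞` constant commutes with infima in `EReal`, provided the
infimum is not `⊥`. -/
lemma my_iInf_add_ennreal {ι : Sort*} (f : ι → EReal) (hf : (⨅ i, f i) ≠ ⊥) (c : ℝ≥0∞) :
    (⨅ i, f i) + (c : EReal) = ⨅ i, (f i + (c : EReal)) := by
  cases c with
  | top =>
    rw [EReal.coe_ennreal_top, EReal.add_top_of_ne_bot hf]
    refine (le_antisymm le_top (le_iInf fun i => ?_)).symm.symm |>.symm
    rw [EReal.add_top_of_ne_bot (fun h => hf (le_bot_iff.1 (h ▸ iInf_le f i)))]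
  | coe c =>
    rw [EReal.coe_nnreal_eq_coe_real c]
    exact my_iInf_add_coe f c

/-- The key algebraic identity between the two infima. -/
lemma my_alg_id {S E : Type*} (T : S → E) (IS : E → ℝ≥0∞) (Iz : E → S → ℝ≥0∞)
    (hIfib : ∀ z s, T s ≠ z → Iz z s = ⊤) (F : S → ℝ) (Ft : E → ℝ)
    (hFtinf : ∀ z, (Ft z : EReal) = ⨅ s, ((F s : EReal) + (Iz z s : EReal))) :
    (⨅ z, ((Ft z : EReal) + (IS z : EReal)))
      = ⨅ s, ((F s : EReal) + ((IS (T s) + Iz (T s) s : ℝ≥0∞) : EReal)) := by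
  have h1 : ∀ z, (Ft z : EReal) + (IS z : EReal)
      = ⨅ s, ((F s : EReal) + (Iz z s : EReal) + (IS z : EReal)) := by
    intro z
    rw [hFtinf z, my_iInf_add_ennreal _ (by rw [← hFtinf z]; exact EReal.coe_ne_bot _)]
  rw [iInf_congr h1, iInf_comm]
  refine iInf_congr fun s => le_antisymm (iInf_le_of_le (T s) (le_of_eq ?_)) (le_iInf fun z => ?_)
  · rw [EReal.coe_ennreal_add]; abel
  · by_cases hz : T s = z
    · subst hz
      rw [EReal.coe_ennreal_add]
      exact le_of_eq (by abel)
    · rw [hIfib z s hz, EReal.coe_ennreal_top, EReal.add_top_of_ne_bot (EReal.coe_ne_bot _),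
        EReal.top_add_of_ne_bot]
      · exact le_top
      · exact EReal.coe_ennreal_ne_bot _

lemma my_exp_integrable {X : Type*} [MeasurableSpace X] [TopologicalSpace X]
    [OpensMeasurableSpace X] (μ : Measure X) [IsFiniteMeasure μ] {f : X → ℝ}
    (hf : Continuous f) {B : ℝ} (hB : ∀ x, |f x| ≤ B) {η : ℝ} (hη : 0 < η) :
    Integrable (fun x => Real.exp (-f x / η)) μ := by
  refine Integrable.mono' (integrable_const (Real.exp (B / η)))
    ((Real.continuous_exp.comp ((hf.neg).div_const η)).aestronglyMeasurable) ?_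
  filter_upwards with x
  rw [Real.norm_eq_abs, abs_of_pos (Real.exp_pos _)]
  refine Real.exp_le_exp.2 (div_le_div_of_nonneg_right ?_ hη.le)
  have := abs_le.1 (hB x); linarith

lemma my_exp_int_lb {X : Type*} [MeasurableSpace X] [TopologicalSpace X]
    [OpensMeasurableSpace X] (μ : Measure X) [IsProbabilityMeasure μ] {f : X → ℝ}
    (hf : Continuous f) {B : ℝ} (hB : ∀ x, |f x| ≤ B) {η : ℝ} (hη : 0 < η) :
    Real.exp (-B / η) ≤ ∫ x, Real.exp (-f x / η) ∂μ := by
  have h1 : ∫ _x, Real.exp (-B / η) ∂μ = Real.exp (-B / η) := by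
    simp [integral_const]
  rw [← h1]
  refine integral_mono (integrable_const _) (my_exp_integrable μ hf hB hη) fun x => ?_
  refine Real.exp_le_exp.2 (div_le_div_of_nonneg_right ?_ hη.le)
  have := abs_le.1 (hB x); linarith

lemma my_ofReal_int {X : Type*} [MeasurableSpace X] [TopologicalSpace X]
    [OpensMeasurableSpace X] (μ : Measure X) [IsFiniteMeasure μ] {f : X → ℝ}
    (hf : Continuous f) {B : ℝ} (hB : ∀ x, |f x| ≤ B) {η : ℝ} (hη : 0 < η) :
    ENNReal.ofReal (∫ x, Real.exp (-f x / η) ∂μ)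
      = ∫⁻ x, ENNReal.ofReal (Real.exp (-f x / η)) ∂μ :=
  MeasureTheory.ofReal_integral_eq_lintegral_ofReal (my_exp_integrable μ hf hB hη)
    (Filter.Eventually.of_forall fun x => (Real.exp_pos _).le)

/-- the transfer mechanism: let `T : S → E` be continuous between Polish
spaces, `π_η` probability measures on `S` with pushforwards `m_η = T_*π_η` and
disintegrations `Q_η(z)` concentrated on the fibers `{T = z}`.  If the `m_η` are all
supported on a common compact `K`, satisfy a Laplace principle with good rate `I_S`,
and the fiberwise Laplace functionals converge uniformly on `K` to
`F̃(z) = inf_s [F(s) + I^z(s)]` (bounded and continuous) for a family of fiber rates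
`I^z` that are `+∞` off the fiber, then `π_η` satisfies the Laplace principle on `S`
with rate `I_D(s) = I_S(T(s)) + I^{T(s)}(s)`. -/
theorem laplace_principle_transfer
    {S E : Type*}
    [TopologicalSpace S] [PolishSpace S] [MeasurableSpace S] [BorelSpace S]
    [TopologicalSpace E] [PolishSpace E] [MeasurableSpace E] [BorelSpace E]
    (T : S → E) (hT : Continuous T)
    (π : ℝ → Measure S) (hπ : ∀ η ∈ Set.Ioo (0:ℝ) 1, IsProbabilityMeasure (π η))
    (Q : ℝ → E → Measure S)
    (hQprob : ∀ η ∈ Set.Ioo (0:ℝ) 1, ∀ z, IsProbabilityMeasure (Q η z))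
    (hQmeas : ∀ η ∈ Set.Ioo (0:ℝ) 1, Measurable (Q η))
    (hQdis : ∀ η ∈ Set.Ioo (0:ℝ) 1, ∀ A : Set S, MeasurableSet A →
      π η A = ∫⁻ z, Q η z A ∂((π η).map T))
    (hQfib : ∀ η ∈ Set.Ioo (0:ℝ) 1, ∀ z, Q η z {s | T s = z} = 1)
    (K : Set E) (hK : IsCompact K)
    (hKm : ∀ η ∈ Set.Ioo (0:ℝ) 1, (π η).map T K = 1)
    (IS : E → ℝ≥0∞)
    (hIS : LaplacePrinciple (fun η => (π η).map T) IS) (hISgood : GoodRate IS)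
    (Iz : E → S → ℝ≥0∞)
    (hIfib : ∀ z s, T s ≠ z → Iz z s = ⊤)
    (hunif : ∀ F : S → ℝ, Continuous F → (∃ B, ∀ s, |F s| ≤ B) →
      ∃ Ft : E → ℝ, Continuous Ft ∧ (∃ B, ∀ z, |Ft z| ≤ B) ∧
        (∀ z, (Ft z : EReal) = ⨅ s, ((F s : EReal) + (Iz z s : EReal))) ∧
        (∀ ε > (0:ℝ), ∃ η₀ > (0:ℝ), ∀ η ∈ Set.Ioo (0:ℝ) 1, η < η₀ → ∀ z ∈ K,
          |(-η * Real.log (∫ s, Real.exp (-F s / η) ∂(Q η z))) - Ft z| ≤ ε)) :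
    LaplacePrinciple π (fun s => IS (T s) + Iz (T s) s) := by
  intro F hF hFb
  obtain ⟨B, hB⟩ := hFb
  obtain ⟨Ft, hFtc, ⟨Bt, hBt⟩, hFtinf, hconv⟩ := hunif F hF ⟨B, hB⟩
  have hprob : ∀ η ∈ Set.Ioo (0:ℝ) 1, IsProbabilityMeasure ((π η).map T) := by
    intro η hη
    haveI := hπ η hη
    exact Measure.isProbabilityMeasure_map hT.measurable.aemeasurable
  -- the infimum of `IS` is `0`
  have hIS0 : ((0:ℝ) : EReal) = ⨅ z, (((0:ℝ) : EReal) + (IS z : EReal)) := by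
    have h1 := hIS (fun _ => (0:ℝ)) continuous_const ⟨0, fun _ => by simp⟩
    have h2 : Tendsto
        (fun η : ℝ => ((-η * Real.log
          (∫ _x, Real.exp (-(0:ℝ) / η) ∂((π η).map T)) : ℝ) : EReal))
        (nhdsWithin 0 (Set.Ioi 0)) (nhds (((0:ℝ)) : EReal)) := by
      have heq : ∀ᶠ η in nhdsWithin (0:ℝ) (Set.Ioi 0),
          (fun _ : ℝ => (((0:ℝ)) : EReal)) η
            = ((-η * Real.log (∫ _x, Real.exp (-(0:ℝ) / η) ∂((π η).map T)) : ℝ) : EReal) := by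
        filter_upwards [Ioo_mem_nhdsGT_of_mem
          (show (0:ℝ) ∈ Set.Ico (0:ℝ) 1 by simp)] with η hη
        haveI := hprob η hη
        norm_num
      exact Tendsto.congr' heq tendsto_const_nhds
    exact tendsto_nhds_unique h2 h1
  obtain ⟨z₀, hz₀⟩ : ∃ z₀, (IS z₀ : EReal) < 1 := by
    refine iInf_lt_iff.1 ?_
    have h := hIS0
    simp only [EReal.coe_zero, zero_add] at h
    rw [← h]
    norm_num
  set L : EReal := ⨅ z, ((Ft z : EReal) + (IS z : EReal)) with hLdef
  have hLbot : L ≠ ⊥ := by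
    have hge : ((-Bt : ℝ) : EReal) ≤ L := by
      refine le_iInf fun z => ?_
      calc ((-Bt:ℝ):EReal) ≤ ((Ft z : ℝ):EReal) := by
            exact_mod_cast (show (-Bt:ℝ) ≤ Ft z by have := abs_le.1 (hBt z); linarith)
        _ ≤ (Ft z : EReal) + (IS z : EReal) :=
            le_add_of_nonneg_right (EReal.coe_ennreal_nonneg _)
    intro h
    rw [h, le_bot_iff] at hge
    exact EReal.coe_ne_bot _ hge
  have hLtop : L ≠ ⊤ := by
    have h1 : L ≤ (Ft z₀ : EReal) + (IS z₀ : EReal) := iInf_le _ z₀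
    have h2 : (Ft z₀ : EReal) + (IS z₀ : EReal) < ⊤ := by
      refine lt_of_le_of_lt (add_le_add le_rfl hz₀.le) ?_
      rw [show (1 : EReal) = ((1:ℝ) : EReal) from rfl, ← EReal.coe_add]
      exact EReal.coe_lt_top _
    exact (lt_of_le_of_lt h1 h2).ne
  set l : ℝ := L.toReal with hldef
  have hLl : L = (l : EReal) := (EReal.coe_toReal hLtop hLbot).symm
  have hkey : (⨅ s, ((F s : EReal) + ((IS (T s) + Iz (T s) s : ℝ≥0∞) : EReal)))
      = (l : EReal) := by
    rw [← my_alg_id T IS Iz hIfib F Ft hFtinf, ← hLdef, hLl]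
  -- the two comparison limits
  have hbl : ∀ c : ℝ, Tendsto
      (fun η : ℝ => -η * Real.log (∫ z, Real.exp (-(Ft z + c) / η) ∂((π η).map T)))
      (nhdsWithin 0 (Set.Ioi 0)) (nhds (l + c)) := by
    intro c
    have hbd : ∀ z, |Ft z + c| ≤ Bt + |c| := fun z =>
      (abs_add_le _ _).trans (add_le_add (hBt z) le_rfl)
    have h1 := hIS (fun z => Ft z + c) (hFtc.add continuous_const) ⟨Bt + |c|, hbd⟩
    beta_reduce at h1
    have h2 : (⨅ x, (((Ft x + c : ℝ)) : EReal) + (IS x : EReal)) = ((l + c : ℝ) : EReal) := by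
      have e : ∀ z, (((Ft z + c : ℝ)) : EReal) + (IS z : EReal)
          = ((Ft z : EReal) + (IS z : EReal)) + ((c : ℝ) : EReal) := by
        intro z
        rw [EReal.coe_add]
        abel
      rw [iInf_congr e, ← my_iInf_add_coe, ← hLdef, hLl, ← EReal.coe_add]
    rw [h2] at h1
    exact EReal.tendsto_coe.1 h1
  -- reduce to a real statement
  rw [show (⨅ x, ((F x : EReal) + (((fun s => IS (T s) + Iz (T s) s) x : ℝ≥0∞) : EReal)))
      = (l : EReal) from hkey, EReal.tendsto_coe, Metric.tendsto_nhds]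
  intro ε hε
  set ε' : ℝ := ε / 4 with hε'def
  have hε' : 0 < ε' := by positivity
  obtain ⟨η₀, hη₀pos, hη₀⟩ := hconv ε' hε'
  have e2 := Metric.tendsto_nhds.1 (hbl (-ε')) ε' hε'
  have e3 := Metric.tendsto_nhds.1 (hbl ε') ε' hε'
  have hIoo : Set.Ioo (0:ℝ) (min 1 η₀) ∈ nhdsWithin (0:ℝ) (Set.Ioi 0) :=
    Ioo_mem_nhdsGT_of_mem ⟨le_refl _, lt_min one_pos hη₀pos⟩
  filter_upwards [hIoo, e2, e3] with η hηm h2 h3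
  have hη0 : 0 < η := hηm.1
  have hmem : η ∈ Set.Ioo (0:ℝ) 1 := ⟨hη0, (lt_min_iff.1 hηm.2).1⟩
  have hηlt : η < η₀ := (lt_min_iff.1 hηm.2).2
  haveI := hπ η hmem
  haveI := hprob η hmem
  -- abbreviations
  set m : Measure E := (π η).map T with hm
  set A : ℝ := ∫ s, Real.exp (-F s / η) ∂(π η) with hA
  set U : ℝ := ∫ z, Real.exp (-(Ft z + -ε') / η) ∂m with hU
  set V : ℝ := ∫ z, Real.exp (-(Ft z + ε') / η) ∂m with hV
  have hcU : Continuous fun z => Ft z + -ε' := hFtc.add continuous_const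
  have hcV : Continuous fun z => Ft z + ε' := hFtc.add continuous_const
  have hbdU : ∀ z, |Ft z + -ε'| ≤ Bt + |(-ε')| := fun z =>
    (abs_add_le _ _).trans (add_le_add (hBt z) le_rfl)
  have hbdV : ∀ z, |Ft z + ε'| ≤ Bt + |ε'| := fun z =>
    (abs_add_le _ _).trans (add_le_add (hBt z) le_rfl)
  -- disintegration
  have hbind : π η = Measure.bind m (Q η) := by
    ext A' hA'
    rw [Measure.bind_apply hA' (hQmeas η hmem).aemeasurable]
    exact hQdis η hmem A' hA'
  have hAeq : ENNReal.ofReal A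
      = ∫⁻ z, ENNReal.ofReal (∫ s, Real.exp (-F s / η) ∂(Q η z)) ∂m := by
    rw [hA, my_ofReal_int (π η) hF hB hη0]
    conv_lhs => rw [hbind]
    rw [Measure.lintegral_bind (f := fun s => ENNReal.ofReal (Real.exp (-F s / η)))
      (hQmeas η hmem).aemeasurable (by fun_prop)]
    refine lintegral_congr fun z => ?_
    haveI := hQprob η hmem z
    exact (my_ofReal_int (Q η z) hF hB hη0).symm
  -- fiber integral bounds
  have hJlb : ∀ z, Real.exp (-B / η) ≤ ∫ s, Real.exp (-F s / η) ∂(Q η z) := by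
    intro z
    haveI := hQprob η hmem z
    exact my_exp_int_lb (Q η z) hF hB hη0
  have hJpos : ∀ z, 0 < ∫ s, Real.exp (-F s / η) ∂(Q η z) :=
    fun z => (Real.exp_pos _).trans_le (hJlb z)
  have hKbounds : ∀ z ∈ K,
      Real.exp (-(Ft z + ε') / η) ≤ (∫ s, Real.exp (-F s / η) ∂(Q η z)) ∧
      (∫ s, Real.exp (-F s / η) ∂(Q η z)) ≤ Real.exp (-(Ft z + -ε') / η) := by
    intro z hz
    have habs := hη₀ η hmem hηlt z hz
    have h1 := (abs_le.1 habs).1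
    have h2' := (abs_le.1 habs).2
    have hlog := Real.exp_log (hJpos z)
    constructor
    · rw [← hlog]
      apply Real.exp_le_exp.2
      rw [div_le_iff₀ hη0]
      nlinarith [h2']
    · rw [← hlog]
      apply Real.exp_le_exp.2
      rw [le_div_iff₀ hη0]
      nlinarith [h1]
  -- almost everywhere in K
  have hmK : ∀ᵐ z ∂m, z ∈ K := by
    have hKc : m Kᶜ = 0 := by
      rw [measure_compl hK.isClosed.measurableSet (measure_ne_top _ _), measure_univ,
        hm, hKm η hmem]
      simp
    exact hKc
  -- sandwiching A between V and U
  have hup : A ≤ U := by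
    refine (ENNReal.ofReal_le_ofReal_iff (integral_nonneg fun z => (Real.exp_pos _).le)).1 ?_
    rw [hAeq, my_ofReal_int m hcU hbdU hη0]
    refine lintegral_mono_ae ?_
    filter_upwards [hmK] with z hz
    exact ENNReal.ofReal_le_ofReal (hKbounds z hz).2
  have hlo : V ≤ A := by
    refine (ENNReal.ofReal_le_ofReal_iff (integral_nonneg fun z => (Real.exp_pos _).le)).1 ?_
    rw [hAeq, my_ofReal_int m hcV hbdV hη0]
    refine lintegral_mono_ae ?_
    filter_upwards [hmK] with z hz
    exact ENNReal.ofReal_le_ofReal (hKbounds z hz).1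
  have hVpos : 0 < V := (Real.exp_pos _).trans_le (my_exp_int_lb m hcV hbdV hη0)
  have hApos : 0 < A := hVpos.trans_le hlo
  -- conclude
  have m1 : -η * Real.log U ≤ -η * Real.log A :=
    mul_le_mul_of_nonpos_left (Real.log_le_log hApos hup) (by linarith)
  have m2 : -η * Real.log A ≤ -η * Real.log V :=
    mul_le_mul_of_nonpos_left (Real.log_le_log hVpos hlo) (by linarith)
  rw [Real.dist_eq] at h2 h3 ⊢
  have hb2 := abs_lt.1 h2
  have hb3 := abs_lt.1 h3
  rw [abs_lt]
  constructor <;> [nlinarith [hb3.1, hb3.2, m2]; nlinarith [hb2.1, hb2.2, m1]]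

end
end

section
/- Let d ≥ 1, x, y ∈ ℝ^d, M ≥ 0, and let ν ∈ L²([0,1];ℝ^d) with ∫₀¹ |ν(s)|² ds ≤ M. Suppose φ : [0,1) → ℝ^d satisfies φ(t) = x + ∫₀ᵗ ( −(φ(s) − y)/(1 − s) + ν(s) ) ds for all t ∈ [0,1). Then for every t ∈ [0,1): |φ(t) − y| ≤ (1 − t)·|x − y| + √(M·(1 − t)). In particular, φ extends to a continuous path on [0,1] with φ(1) = y, and for every δ ∈ (0,1], sup_{t∈[1−δ,1]} |φ(t) − y| ≤ δ·|x − y| + √(M·δ). (The deterministic endpoint estimate of Lemma 3.7 / lem:controlled-bridges-near-y in the Brownian-bridge case.) -/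
open MeasureTheory Set

noncomputable section

section Helpers

variable {E : Type*} [NormedAddCommGroup E] [NormedSpace ℝ E] [CompleteSpace E]

lemma smul_intervalIntegrable' {a b : ℝ} {c : ℝ → ℝ} {f : ℝ → E}
    (hc : ContinuousOn c (uIcc a b)) (hf : IntervalIntegrable f volume a b) :
    IntervalIntegrable (fun s => c s • f s) volume a b := by
  obtain ⟨C, hC⟩ := isCompact_uIcc.exists_bound_of_continuousOn hc
  rw [intervalIntegrable_iff] at hf ⊢
  apply Integrable.mono' (hf.norm.const_mul C)
  · exact ((hc.mono uIoc_subset_uIcc).aestronglyMeasurable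
      measurableSet_uIoc).smul hf.aestronglyMeasurable
  · filter_upwards [ae_restrict_mem measurableSet_uIoc] with s hs
    rw [norm_smul]
    exact mul_le_mul_of_nonneg_right (hC s (uIoc_subset_uIcc hs)) (norm_nonneg _)

lemma fubini_primitive' {t : ℝ} (ht : 0 ≤ t) {f : ℝ → E} (hf : IntegrableOn f (Ioc 0 t)) :
    ∫ s in (0:ℝ)..t, (∫ u in (0:ℝ)..s, f u) = ∫ u in (0:ℝ)..t, (t - u) • f u := by
  have key : Integrable (Function.uncurry fun (s u : ℝ) => (Ioc 0 s).indicator f u)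
      ((volume.restrict (Ioc 0 t)).prod (volume.restrict (Ioc 0 t))) := by
    have hsetm : MeasurableSet {p : ℝ × ℝ | 0 < p.2 ∧ p.2 ≤ p.1} := by
      apply MeasurableSet.inter
      · exact measurableSet_lt measurable_const measurable_snd
      · exact measurableSet_le measurable_snd measurable_fst
    have heq : (Function.uncurry fun (s u : ℝ) => (Ioc 0 s).indicator f u)
        = {p : ℝ × ℝ | 0 < p.2 ∧ p.2 ≤ p.1}.indicator (fun p => f p.2) := by
      ext p
      by_cases h : p.2 ∈ Ioc 0 p.1
      · rw [Function.uncurry]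
        simp only [indicator_of_mem h]
        rw [indicator_of_mem]
        exact h
      · rw [Function.uncurry]
        simp only [indicator_of_notMem h]
        rw [indicator_of_notMem]
        exact h
    rw [heq]
    apply Integrable.indicator _ hsetm
    exact (integrable_const (1:ℝ)).smul_prod hf |>.congr (by simp)
  rw [intervalIntegral.integral_of_le ht, intervalIntegral.integral_of_le ht]
  have step1 : ∀ s ∈ Ioc (0:ℝ) t, (∫ u in (0:ℝ)..s, f u)
      = ∫ u in Ioc (0:ℝ) t, (Ioc 0 s).indicator f u := by
    intro s hs
    rw [intervalIntegral.integral_of_le hs.1.le, setIntegral_indicator measurableSet_Ioc]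
    congr 1
    rw [Ioc_inter_Ioc]
    simp [hs.2]
  rw [setIntegral_congr_fun measurableSet_Ioc step1,
    MeasureTheory.integral_integral_swap key]
  apply setIntegral_congr_fun measurableSet_Ioc
  intro u hu
  have : ∀ s : ℝ, (Ioc 0 s).indicator f u = (Ici u).indicator (fun _ : ℝ => f u) s := by
    intro s
    by_cases h : u ≤ s
    · rw [indicator_of_mem (mem_Ioc.2 ⟨hu.1, h⟩)]
      exact (indicator_of_mem (mem_Ici.2 h) (fun _ : ℝ => f u)).symm
    · rw [indicator_of_notMem (fun hc => h (mem_Ioc.1 hc).2)]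
      exact (indicator_of_notMem (fun hc => h (mem_Ici.1 hc)) (fun _ : ℝ => f u)).symm
  simp_rw [this]
  rw [setIntegral_indicator measurableSet_Ici, setIntegral_const]
  have : Ioc (0:ℝ) t ∩ Ici u = Icc u t := by
    ext s
    constructor
    · rintro ⟨⟨_, h2⟩, h3⟩; exact ⟨h3, h2⟩
    · rintro ⟨h1, h2⟩; exact ⟨⟨lt_of_lt_of_le hu.1 h1, h2⟩, h1⟩
  rw [this, Real.volume_real_Icc_of_le (by linarith [hu.2])]

lemma primitive_combo' {t : ℝ} (ht : 0 ≤ t) {g : ℝ → E} (hg : IntervalIntegrable g volume 0 t) :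
    (∫ s in (0:ℝ)..t, (1 - s) • g s) - (∫ s in (0:ℝ)..t, (∫ u in (0:ℝ)..s, g u))
      = (1 - t) • ∫ u in (0:ℝ)..t, g u := by
  have h1 : IntervalIntegrable (fun s => (1 - s) • g s) volume 0 t :=
    smul_intervalIntegrable' (continuousOn_const.sub continuousOn_id) hg
  have h2 : IntervalIntegrable (fun s => (t - s) • g s) volume 0 t :=
    smul_intervalIntegrable' (continuousOn_const.sub continuousOn_id) hg
  rw [fubini_primitive' ht ((intervalIntegrable_iff_integrableOn_Ioc_of_le ht).mp hg),
    ← intervalIntegral.integral_sub h1 h2]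
  have hs : ∀ s : ℝ, (1 - s) • g s - (t - s) • g s = (1 - t) • g s := by
    intro s
    rw [← sub_smul]
    congr 1
    ring
  simp_rw [hs]
  rw [intervalIntegral.integral_smul]

lemma cs_bound' {t : ℝ} (ht0 : 0 ≤ t) (ht1 : t < 1) {ν : ℝ → E}
    (hν : MemLp ν 2 (volume.restrict (Icc (0:ℝ) 1))) {M : ℝ} (hM : 0 ≤ M)
    (hνM : (∫ s in (0:ℝ)..1, ‖ν s‖ ^ 2) ≤ M) :
    (∫ s in (0:ℝ)..t, (1 - s)⁻¹ * ‖ν s‖) ≤ Real.sqrt ((1-t)⁻¹) * Real.sqrt M := by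
  have hsub : Ioc (0:ℝ) t ⊆ Icc 0 1 := fun s hs => ⟨hs.1.le, hs.2.trans ht1.le⟩
  have hle : volume.restrict (Ioc (0:ℝ) t) ≤ volume.restrict (Icc (0:ℝ) 1) :=
    Measure.restrict_mono hsub le_rfl
  have hpq : (2:ℝ).HolderConjugate 2 := Real.holderConjugate_iff.mpr ⟨one_lt_two, by norm_num⟩
  have h2 : ENNReal.ofReal (2:ℝ) = 2 := by norm_num
  have hmf : AEStronglyMeasurable (fun s : ℝ => (1-s)⁻¹) (volume.restrict (Ioc (0:ℝ) t)) :=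
    ((measurable_const.sub measurable_id).inv).aestronglyMeasurable
  have hf : MemLp (fun s : ℝ => (1-s)⁻¹) (ENNReal.ofReal 2) (volume.restrict (Ioc (0:ℝ) t)) := by
    apply MemLp.of_bound hmf ((1-t)⁻¹)
    filter_upwards [ae_restrict_mem measurableSet_Ioc] with s hs
    rw [Real.norm_eq_abs, abs_of_nonneg (inv_nonneg.mpr (by linarith [hs.2, ht1]) : (0:ℝ) ≤ (1 - s)⁻¹)]
    gcongr
    · linarith [hs.2]
  have hg : MemLp (fun s : ℝ => ‖ν s‖) (ENNReal.ofReal 2) (volume.restrict (Ioc (0:ℝ) t)) := by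
    rw [h2]
    exact (hν.norm).mono_measure hle
  have hf0 : 0 ≤ᵐ[volume.restrict (Ioc (0:ℝ) t)] (fun s : ℝ => (1-s)⁻¹) := by
    filter_upwards [ae_restrict_mem measurableSet_Ioc] with s hs
    have : s < 1 := lt_of_le_of_lt hs.2 ht1
    exact inv_nonneg.mpr (by linarith)
  have hg0 : 0 ≤ᵐ[volume.restrict (Ioc (0:ℝ) t)] (fun s : ℝ => ‖ν s‖) :=
    Filter.Eventually.of_forall fun s => norm_nonneg _
  have key := integral_mul_le_Lp_mul_Lq_of_nonneg hpq hf0 hg0 hf hg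
  have hconv : ∀ x : ℝ, x ^ (2:ℝ) = x ^ (2:ℕ) := fun x => by
    rw [show (2:ℝ) = ((2:ℕ):ℝ) by norm_num, Real.rpow_natCast]
  simp_rw [hconv] at key
  rw [intervalIntegral.integral_of_le ht0]
  refine key.trans ?_
  -- bound the two factors
  have hA : (∫ s in Ioc (0:ℝ) t, ((1-s)⁻¹) ^ (2:ℕ)) = (1-t)⁻¹ - 1 := by
    rw [← intervalIntegral.integral_of_le ht0]
    have hne : ∀ s ∈ uIcc (0:ℝ) t, (1:ℝ) - s ≠ 0 := by
      intro s hs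
      rw [uIcc_of_le ht0] at hs
      have : s < 1 := lt_of_le_of_lt hs.2 ht1
      linarith
    rw [intervalIntegral.integral_eq_sub_of_hasDerivAt (f := fun s => (1-s)⁻¹)
      (f' := fun s => ((1-s)⁻¹) ^ (2:ℕ))]
    · norm_num
    · intro s hs
      have h := (((hasDerivAt_id s).const_sub 1).inv (hne s hs))
      refine h.congr_deriv ?_
      simp only [id, neg_neg, inv_pow, one_div]
    · apply ContinuousOn.intervalIntegrable
      exact ((continuousOn_const.sub continuousOn_id).inv₀ hne).pow 2
  have hB : (∫ s in Ioc (0:ℝ) t, ‖ν s‖ ^ (2:ℕ)) ≤ M := by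
    have hsq : IntegrableOn (fun s => ‖ν s‖ ^ (2:ℕ)) (Icc (0:ℝ) 1) volume :=
      hν.norm.integrable_sq
    refine le_trans ?_ hνM
    rw [intervalIntegral.integral_of_le zero_le_one]
    apply setIntegral_mono_set (hsq.mono_set Ioc_subset_Icc_self)
    · exact Filter.Eventually.of_forall fun s => by positivity
    · exact HasSubset.Subset.eventuallyLE (fun s hs => ⟨hs.1, hs.2.trans ht1.le⟩)
  have hA0 : 0 ≤ ∫ s in Ioc (0:ℝ) t, ((1-s)⁻¹) ^ (2:ℕ) :=
    setIntegral_nonneg measurableSet_Ioc fun s _ => by positivity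
  have hB0 : 0 ≤ ∫ s in Ioc (0:ℝ) t, ‖ν s‖ ^ (2:ℕ) :=
    setIntegral_nonneg measurableSet_Ioc fun s _ => by positivity
  rw [Real.sqrt_eq_rpow, Real.sqrt_eq_rpow]
  apply mul_le_mul
  · apply Real.rpow_le_rpow hA0 _ (by norm_num)
    rw [hA]
    linarith
  · exact Real.rpow_le_rpow hB0 hB (by norm_num)
  · exact Real.rpow_nonneg hB0 _
  · exact Real.rpow_nonneg (inv_nonneg.mpr (by linarith)) _

end Helpers

abbrev Euc (d : ℕ) := EuclideanSpace ℝ (Fin d)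

/-- `C₁ = C([0,1], ℝ^d)` with the supremum metric. -/
abbrev PathSp (d : ℕ) := C(Set.Icc (0:ℝ) 1, Euc d)

/-- the deterministic endpoint estimate for controlled Brownian bridge
dynamics: if `φ(t) = x + ∫₀ᵗ (−(φ(s)−y)/(1−s) + ν(s)) ds` on `[0,1)` with
`∫₀¹|ν|² ≤ M`, then `|φ(t) − y| ≤ (1−t)|x−y| + √(M(1−t))` for all `t ∈ [0,1)`;
in particular `φ` extends to a continuous path on `[0,1]` with value `y` at `1`,
and `sup_{t∈[1−δ,1]} |φ(t) − y| ≤ δ|x−y| + √(Mδ)` for every `δ ∈ (0,1]`. -/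
theorem controlled_bridge_endpoint_estimate
    {d : ℕ} (hd : 1 ≤ d) (x y : Euc d) (M : ℝ) (hM : 0 ≤ M)
    (ν : ℝ → Euc d) (hν : MemLp ν 2 (volume.restrict (Set.Icc (0:ℝ) 1)))
    (hνM : (∫ s in (0:ℝ)..1, ‖ν s‖ ^ 2) ≤ M)
    (φ : ℝ → Euc d)
    (hint : ∀ t ∈ Set.Ico (0:ℝ) 1,
      IntervalIntegrable (fun s => (1 - s)⁻¹ • (y - φ s) + ν s) volume 0 t)
    (hφ : ∀ t ∈ Set.Ico (0:ℝ) 1,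
      φ t = x + ∫ s in (0:ℝ)..t, ((1 - s)⁻¹ • (y - φ s) + ν s)) :
    (∀ t ∈ Set.Ico (0:ℝ) 1,
        ‖φ t - y‖ ≤ (1 - t) * ‖x - y‖ + Real.sqrt (M * (1 - t))) ∧
    (∃ ψ : PathSp d,
      (∀ t : Set.Icc (0:ℝ) 1, (t : ℝ) < 1 → ψ t = φ t) ∧
      ψ ⟨1, Set.right_mem_Icc.mpr zero_le_one⟩ = y ∧
      ∀ δ ∈ Set.Ioc (0:ℝ) 1, ∀ t : Set.Icc (0:ℝ) 1, 1 - δ ≤ (t : ℝ) →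
        ‖ψ t - y‖ ≤ δ * ‖x - y‖ + Real.sqrt (M * δ)) := by
  classical
  have hνIcc : IntegrableOn ν (Icc (0:ℝ) 1) volume := hν.integrable one_le_two
  set g : ℝ → Euc d := fun s => (1 - s)⁻¹ • ν s with hgdef
  have hgInt : ∀ b, 0 ≤ b → b < 1 → IntervalIntegrable g volume 0 b := by
    intro b hb0 hb1
    rw [intervalIntegrable_iff_integrableOn_Ioc_of_le hb0]
    have hνb : IntegrableOn ν (Ioc 0 b) volume :=
      hνIcc.mono_set (fun s hs => ⟨hs.1.le, hs.2.trans hb1.le⟩)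
    apply Integrable.mono' (hνb.norm.const_mul (1-b)⁻¹)
    · exact ((measurable_const.sub measurable_id).inv.aestronglyMeasurable).smul
        hνb.aestronglyMeasurable
    · filter_upwards [ae_restrict_mem measurableSet_Ioc] with s hs
      rw [hgdef]
      simp only
      rw [norm_smul, Real.norm_eq_abs,
        abs_of_nonneg (inv_nonneg.mpr (by linarith [hs.2, hb1] : (0:ℝ) ≤ 1 - s))]
      apply mul_le_mul_of_nonneg_right _ (norm_nonneg _)
      gcongr
      · linarith [hs.2]
  set F : ℝ → Euc d := fun r => ∫ s in (0:ℝ)..r, g s with hFdef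
  have hFcont : ∀ b, 0 ≤ b → b < 1 → ContinuousOn F (Icc 0 b) := by
    intro b hb0 hb1
    have := intervalIntegral.continuousOn_primitive_interval' (hgInt b hb0 hb1) left_mem_uIcc
    rwa [uIcc_of_le hb0] at this
  set ψ₀ : ℝ → Euc d := fun r => y + (1 - r) • (x - y) + (1 - r) • F r with hψdef
  have hψcont : ∀ b, 0 ≤ b → b < 1 → ContinuousOn ψ₀ (Icc 0 b) := by
    intro b hb0 hb1
    apply ContinuousOn.add
    · exact continuousOn_const.add
        ((continuousOn_const.sub continuousOn_id).smul continuousOn_const)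
    · exact (continuousOn_const.sub continuousOn_id).smul (hFcont b hb0 hb1)
  have hφcont : ∀ b, 0 ≤ b → b < 1 → ContinuousOn φ (Icc 0 b) := by
    intro b hb0 hb1
    have hP : ContinuousOn (fun r => x + ∫ s in (0:ℝ)..r, ((1 - s)⁻¹ • (y - φ s) + ν s))
        (Icc 0 b) := by
      apply continuousOn_const.add
      have := intervalIntegral.continuousOn_primitive_interval' (hint b ⟨hb0, hb1⟩) left_mem_uIcc
      rwa [uIcc_of_le hb0] at this
    exact hP.congr fun r hr => hφ r ⟨hr.1, lt_of_le_of_lt hr.2 hb1⟩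
  -- the rewritten integrand for ψ₀
  set H : ℝ → Euc d := fun s => (1 - s) • g s - ((x - y) + F s) with hHdef
  have hHid : ∀ t, 0 ≤ t → t < 1 → ∀ s ∈ uIcc (0:ℝ) t,
      ((1 - s)⁻¹ • (y - ψ₀ s) + ν s) = H s := by
    intro t ht0 ht1 s hs
    rw [uIcc_of_le ht0] at hs
    have hne : (1:ℝ) - s ≠ 0 := by
      have : s < 1 := lt_of_le_of_lt hs.2 ht1
      linarith
    have hν_eq : ν s = (1 - s) • g s := by
      rw [hgdef]
      simp only
      rw [smul_smul, mul_inv_cancel₀ hne, one_smul]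
    have hy : y - ψ₀ s = -((1 - s) • ((x - y) + F s)) := by
      rw [hψdef]
      simp only
      rw [smul_add]
      abel
    rw [hHdef]
    simp only
    rw [hy, hν_eq, smul_neg, smul_smul, inv_mul_cancel₀ hne, one_smul]
    abel
  have hHint : ∀ t, 0 ≤ t → t < 1 → IntervalIntegrable H volume 0 t := by
    intro t ht0 ht1
    rw [hHdef]
    apply IntervalIntegrable.sub
    · exact smul_intervalIntegrable' (continuousOn_const.sub continuousOn_id) (hgInt t ht0 ht1)
    · apply IntervalIntegrable.add intervalIntegrable_const
      apply ContinuousOn.intervalIntegrable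
      rw [uIcc_of_le ht0]
      exact hFcont t ht0 ht1
  have hψeq : ∀ t, 0 ≤ t → t < 1 → (∫ s in (0:ℝ)..t, H s) = ψ₀ t - x := by
    intro t ht0 ht1
    have h1 : IntervalIntegrable (fun s => (1 - s) • g s) volume 0 t :=
      smul_intervalIntegrable' (continuousOn_const.sub continuousOn_id) (hgInt t ht0 ht1)
    have h2a : IntervalIntegrable (fun _ : ℝ => x - y) volume 0 t := intervalIntegrable_const
    have h2b : IntervalIntegrable F volume 0 t := by
      apply ContinuousOn.intervalIntegrable
      rw [uIcc_of_le ht0]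
      exact hFcont t ht0 ht1
    have hcombo := primitive_combo' ht0 (hgInt t ht0 ht1)
    rw [hHdef]
    simp only
    rw [intervalIntegral.integral_sub h1 (h2a.add h2b),
      intervalIntegral.integral_add h2a h2b, intervalIntegral.integral_const]
    simp only [hψdef]
    have hFt : (∫ s in (0:ℝ)..t, (∫ u in (0:ℝ)..s, g u)) = ∫ s in (0:ℝ)..t, F s := by
      simp only [hFdef]
    have hFtt : F t = ∫ u in (0:ℝ)..t, g u := by simp only [hFdef]
    rw [← hFt, eq_add_of_sub_eq hcombo, ← hFtt]
    module
  -- uniqueness of solutions via Grönwall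
  have huniq : ∀ b, 0 ≤ b → b < 1 → φ b = ψ₀ b := by
    intro b hb0 hb1
    set b' : ℝ := (b + 1) / 2 with hb'def
    have hb'0 : (0:ℝ) ≤ b' := by rw [hb'def]; linarith
    have hbb' : b < b' := by rw [hb'def]; linarith
    have hb'1 : b' < 1 := by rw [hb'def]; linarith
    set w : ℝ → Euc d := fun r => φ r - ψ₀ r with hwdef
    have hwcont : ContinuousOn w (Icc 0 b') := (hφcont b' hb'0 hb'1).sub (hψcont b' hb'0 hb'1)
    set ρ : ℝ → ℝ := fun s => (1 - s)⁻¹ * ‖w s‖ with hρdef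
    have hρcont : ContinuousOn ρ (Icc 0 b') := by
      apply ContinuousOn.mul
      · apply ContinuousOn.inv₀ (continuousOn_const.sub continuousOn_id)
        intro s hs
        have : s < 1 := lt_of_le_of_lt hs.2 hb'1
        simp only [Pi.sub_apply, id]
        intro hc
        linarith [hc]
      · exact hwcont.norm
    have hρInt : IntervalIntegrable ρ volume 0 b' := by
      apply ContinuousOn.intervalIntegrable
      rwa [uIcc_of_le hb'0]
    have hweq : ∀ t ∈ Icc (0:ℝ) b', w t = ∫ s in (0:ℝ)..t, (-(1 - s)⁻¹) • w s := by
      intro t ht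
      have ht1 : t < 1 := lt_of_le_of_lt ht.2 hb'1
      have h1 := hφ t ⟨ht.1, ht1⟩
      have h2 := hψeq t ht.1 ht1
      have hψt : ψ₀ t = x + ∫ s in (0:ℝ)..t, H s := by rw [h2]; abel
      rw [hwdef]
      simp only
      rw [h1, hψt]
      have : x + (∫ s in (0:ℝ)..t, ((1 - s)⁻¹ • (y - φ s) + ν s)) - (x + ∫ s in (0:ℝ)..t, H s)
          = (∫ s in (0:ℝ)..t, ((1 - s)⁻¹ • (y - φ s) + ν s)) - ∫ s in (0:ℝ)..t, H s := by
        abel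
      rw [this, ← intervalIntegral.integral_sub (hint t ⟨ht.1, ht1⟩) (hHint t ht.1 ht1)]
      apply intervalIntegral.integral_congr
      intro s hs
      have hHs := hHid t ht.1 ht1 s hs
      show ((1 - s)⁻¹ • (y - φ s) + ν s) - H s = (-(1 - s)⁻¹) • w s
      rw [← hHs]
      simp only [hwdef]
      module
    set Θ : ℝ → ℝ := fun r => ∫ s in (0:ℝ)..r, ρ s with hΘdef
    have hΘcont : ContinuousOn Θ (Icc 0 b') := by
      have := intervalIntegral.continuousOn_primitive_interval' hρInt left_mem_uIcc
      rwa [uIcc_of_le hb'0] at this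
    have hρ0 : ∀ s ∈ Icc (0:ℝ) b', 0 ≤ ρ s := by
      intro s hs
      rw [hρdef]
      simp only
      apply mul_nonneg (inv_nonneg.mpr (by linarith [hs.2, hb'1])) (norm_nonneg _)
    have hwle : ∀ t ∈ Icc (0:ℝ) b', ‖w t‖ ≤ Θ t := by
      intro t ht
      rw [hweq t ht]
      refine (intervalIntegral.norm_integral_le_integral_norm ht.1).trans ?_
      rw [hΘdef]
      simp only
      apply le_of_eq
      apply intervalIntegral.integral_congr
      intro s hs
      rw [uIcc_of_le ht.1] at hs
      have hs1 : s < 1 := lt_of_le_of_lt (hs.2.trans ht.2) hb'1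
      show ‖(-(1 - s)⁻¹) • w s‖ = ρ s
      rw [norm_smul, Real.norm_eq_abs, abs_neg, abs_of_nonneg (inv_nonneg.mpr (by linarith))]
    have hΘ0 : Θ 0 = 0 := intervalIntegral.integral_same
    have hΘnn : ∀ t ∈ Icc (0:ℝ) b', 0 ≤ Θ t := by
      intro t ht
      rw [hΘdef]
      apply intervalIntegral.integral_nonneg ht.1
      intro s hs
      exact hρ0 s ⟨hs.1, hs.2.trans ht.2⟩
    have hderiv : ∀ t ∈ Ico (0:ℝ) b, HasDerivWithinAt Θ (ρ t) (Ici t) t := by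
      intro t ht
      have htb' : t < b' := lt_trans ht.2 hbb'
      have ht' : t ∈ Icc (0:ℝ) b' := ⟨ht.1, le_of_lt htb'⟩
      have hmem : Icc (0:ℝ) b' ∈ nhdsWithin t (Ioi t) := by
        apply Filter.mem_of_superset
          (Filter.inter_mem self_mem_nhdsWithin
            (mem_nhdsWithin_of_mem_nhds (Iio_mem_nhds htb')))
        rintro s ⟨hs1, hs2⟩
        exact ⟨le_of_lt (lt_of_le_of_lt ht.1 hs1), le_of_lt hs2⟩
      apply intervalIntegral.integral_hasDerivWithinAt_right
        (hρInt.mono_set (by rw [uIcc_of_le ht.1, uIcc_of_le hb'0]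
                            exact Icc_subset_Icc le_rfl (le_of_lt htb')))
        ⟨Icc 0 b', hmem, hρcont.aestronglyMeasurable measurableSet_Icc⟩
      exact (hρcont t ht').mono_of_mem_nhdsWithin hmem
    have hgron := norm_le_gronwallBound_of_norm_deriv_right_le (f := Θ) (f' := ρ)
      (δ := 0) (K := (1-b)⁻¹) (ε := 0) (a := 0) (b := b)
      (hΘcont.mono (Icc_subset_Icc le_rfl (le_of_lt hbb'))) hderiv (by simp [hΘ0]) ?_
    · have hgb := hgron b ⟨hb0, le_rfl⟩
      rw [gronwallBound_ε0] at hgb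
      simp only [sub_zero, zero_mul] at hgb
      have h1 := hwle b ⟨hb0, le_of_lt hbb'⟩
      have h2 : ‖w b‖ ≤ 0 := h1.trans ((le_abs_self _).trans
        (by rwa [Real.norm_eq_abs] at hgb))
      have h3 : w b = 0 := norm_le_zero_iff.mp h2
      simp only [hwdef] at h3
      exact sub_eq_zero.mp h3
    · intro s hs
      have hs' : s ∈ Icc (0:ℝ) b' := ⟨hs.1, le_of_lt (lt_trans hs.2 hbb')⟩
      rw [Real.norm_eq_abs, abs_of_nonneg (hρ0 s hs'), Real.norm_eq_abs,
        abs_of_nonneg (hΘnn s hs'), add_zero]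
      calc ρ s = (1 - s)⁻¹ * ‖w s‖ := by rw [hρdef]
        _ ≤ (1 - b)⁻¹ * ‖w s‖ := by
            apply mul_le_mul_of_nonneg_right _ (norm_nonneg _)
            gcongr
            · linarith [hs.2]
        _ ≤ (1 - b)⁻¹ * Θ s := by
            apply mul_le_mul_of_nonneg_left (hwle s hs') (inv_nonneg.mpr (by linarith))
  -- main estimate
  have hbound : ∀ t, 0 ≤ t → t < 1 →
      ‖φ t - y‖ ≤ (1 - t) * ‖x - y‖ + Real.sqrt (M * (1 - t)) := by
    intro t ht0 ht1
    rw [huniq t ht0 ht1]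
    have hsplit : ψ₀ t - y = (1 - t) • (x - y) + (1 - t) • F t := by
      simp only [hψdef]
      abel
    rw [hsplit]
    refine (norm_add_le _ _).trans ?_
    rw [norm_smul, norm_smul, Real.norm_eq_abs, abs_of_nonneg (by linarith : (0:ℝ) ≤ 1 - t)]
    have hF : ‖F t‖ ≤ Real.sqrt ((1-t)⁻¹) * Real.sqrt M := by
      have h1 : ‖F t‖ ≤ ∫ s in (0:ℝ)..t, ‖g s‖ := by
        simp only [hFdef]
        exact intervalIntegral.norm_integral_le_integral_norm ht0
      refine h1.trans ?_
      have h2 : (∫ s in (0:ℝ)..t, ‖g s‖) = ∫ s in (0:ℝ)..t, (1 - s)⁻¹ * ‖ν s‖ := by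
        apply intervalIntegral.integral_congr
        intro s hs
        rw [uIcc_of_le ht0] at hs
        have hs1 : s < 1 := lt_of_le_of_lt hs.2 ht1
        show ‖g s‖ = (1 - s)⁻¹ * ‖ν s‖
        simp only [hgdef]
        rw [norm_smul, Real.norm_eq_abs, abs_of_nonneg (inv_nonneg.mpr (by linarith))]
      rw [h2]
      exact cs_bound' ht0 ht1 hν hM hνM
    have hstep : (1 - t) * ‖F t‖ ≤ (1 - t) * (Real.sqrt ((1-t)⁻¹) * Real.sqrt M) :=
      mul_le_mul_of_nonneg_left hF (by linarith)
    have hkey : (1 - t) * (Real.sqrt ((1-t)⁻¹) * Real.sqrt M) = Real.sqrt (M * (1 - t)) := by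
      have h1t : (0:ℝ) < 1 - t := by linarith
      rw [Real.sqrt_inv, Real.sqrt_mul hM]
      have hsq : Real.sqrt (1 - t) * Real.sqrt (1 - t) = 1 - t := Real.mul_self_sqrt h1t.le
      have hpos : (0:ℝ) < Real.sqrt (1 - t) := Real.sqrt_pos.2 h1t
      field_simp
      linear_combination (-Real.sqrt M) * hsq
    gcongr
    rw [← hkey]
    exact hstep
  refine ⟨fun t ht => hbound t ht.1 ht.2, ?_⟩
  -- extension to the closed interval
  set fe : ℝ → Euc d := fun r => if r < 1 then φ r else y with hfedef
  have hfb : ∀ t ∈ Icc (0:ℝ) 1, ‖fe t - y‖ ≤ (1 - t) * ‖x - y‖ + Real.sqrt (M * (1 - t)) := by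
    intro t ht
    by_cases h : t < 1
    · simp only [hfedef, if_pos h]
      exact hbound t ht.1 h
    · have ht1 : t = 1 := le_antisymm ht.2 (not_lt.1 h)
      simp only [hfedef, if_neg h, ht1]
      simp
  have hcont : ContinuousOn fe (Icc 0 1) := by
    intro t₀ ht₀
    by_cases h : t₀ < 1
    · set b' : ℝ := (t₀ + 1) / 2 with hb'def
      have hb'0 : (0:ℝ) ≤ b' := by rw [hb'def]; linarith [ht₀.1]
      have htb' : t₀ < b' := by rw [hb'def]; linarith
      have hb'1 : b' < 1 := by rw [hb'def]; linarith
      have hφc : ContinuousWithinAt φ (Icc 0 1) t₀ := by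
        have h1 := (hφcont b' hb'0 hb'1) t₀ ⟨ht₀.1, le_of_lt htb'⟩
        apply h1.mono_of_mem_nhdsWithin
        apply Filter.mem_of_superset
          (Filter.inter_mem self_mem_nhdsWithin
            (mem_nhdsWithin_of_mem_nhds (Iio_mem_nhds htb')))
        rintro s ⟨hs1, hs2⟩
        exact ⟨hs1.1, le_of_lt hs2⟩
      apply hφc.congr_of_eventuallyEq
      · filter_upwards [mem_nhdsWithin_of_mem_nhds (Iio_mem_nhds h)] with s hs
        simp only [hfedef, if_pos (mem_Iio.1 hs)]
      · simp only [hfedef, if_pos h]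
    · have ht1 : t₀ = 1 := le_antisymm ht₀.2 (not_lt.1 h)
      subst ht1
      have hfe1 : fe 1 = y := by simp [hfedef]
      rw [ContinuousWithinAt, hfe1, tendsto_iff_norm_sub_tendsto_zero]
      have hBcont : Filter.Tendsto (fun r : ℝ => (1 - r) * ‖x - y‖ + Real.sqrt (M * (1 - r)))
          (nhdsWithin 1 (Icc 0 1)) (nhds 0) := by
        have hc : Continuous (fun r : ℝ => (1 - r) * ‖x - y‖ + Real.sqrt (M * (1 - r))) := by
          apply Continuous.add
          · exact (continuous_const.sub continuous_id).mul continuous_const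
          · exact Real.continuous_sqrt.comp (continuous_const.mul
              (continuous_const.sub continuous_id))
        have := Filter.Tendsto.mono_left (hc.tendsto 1)
          (nhdsWithin_le_nhds (a := (1:ℝ)) (s := Icc (0:ℝ) 1))
        simpa using this
      refine squeeze_zero' (Filter.Eventually.of_forall fun s => norm_nonneg _) ?_ hBcont
      filter_upwards [self_mem_nhdsWithin] with s hs
      exact hfb s hs
  refine ⟨⟨fun t => fe t, hcont.restrict⟩, ?_, ?_, ?_⟩
  · intro t ht
    show fe t = φ t
    simp only [hfedef, if_pos ht]
  · show fe 1 = y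
    simp [hfedef]
  · intro δ hδ t htδ
    show ‖fe t - y‖ ≤ δ * ‖x - y‖ + Real.sqrt (M * δ)
    refine (hfb t t.2).trans ?_
    have h1t : 1 - (t:ℝ) ≤ δ := by linarith
    have h1t0 : 0 ≤ 1 - (t:ℝ) := by linarith [t.2.2]
    apply add_le_add
    · exact mul_le_mul_of_nonneg_right h1t (norm_nonneg _)
    · exact Real.sqrt_le_sqrt (mul_le_mul_of_nonneg_left h1t hM)


end
end

section
/- Let d ≥ 1, x, y ∈ ℝ^d, and let φ : [0,1] → ℝ^d be absolutely continuous with derivative φ' ∈ L²([0,1];ℝ^d), φ(0) = x and φ(1) = y. Define ν(t) := φ'(t) + (φ(t) − y)/(1 − t) for t ∈ [0,1). Then ν ∈ L²([0,1];ℝ^d) and (1/2)·∫₀¹ |ν(t)|² dt = (1/2)·∫₀¹ |φ'(t)|² dt − (1/2)·|x − y|². (The identification in Section 6.1 of the weak-convergence control rate with Kato's Brownian-bridge rate function.) -/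
open MeasureTheory Set
open RealInnerProductSpace Filter Topology

noncomputable section

section Aux
variable {E : Type*} [NormedAddCommGroup E] [InnerProductSpace ℝ E] [CompleteSpace E]

/-- Fubini swap over a triangle for real-valued integrands. -/
lemma swap_tri {a b : ℝ} {F : ℝ → ℝ → ℝ}
    (hF : Integrable (fun p : ℝ × ℝ => F p.1 p.2)
      ((volume.restrict (Ioc a b)).prod (volume.restrict (Ioc a b)))) :
    ∫ t in Ioc a b, (∫ s in Ioc t b, F t s) = ∫ s in Ioc a b, (∫ t in Ioc a s, F t s) := by
  set μ := volume.restrict (Ioc a b) with hμ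
  set G : ℝ × ℝ → ℝ := ({p : ℝ × ℝ | p.1 < p.2}).indicator (fun p => F p.1 p.2) with hG
  have hS : MeasurableSet {p : ℝ × ℝ | p.1 < p.2} := measurableSet_lt measurable_fst measurable_snd
  have hGi : Integrable G (μ.prod μ) := hF.indicator hS
  have h1 : ∀ t ∈ Ioc a b, (∫ s in Ioc t b, F t s) = ∫ s, G (t, s) ∂μ := by
    intro t ht
    have : (fun s => G (t, s)) = (Ioi t).indicator (fun s => F t s) := by
      ext s
      by_cases h : t < s <;> simp [hG, Set.indicator, h]
    rw [this, hμ, integral_indicator measurableSet_Ioi, Measure.restrict_restrict measurableSet_Ioi]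
    have hset : Ioi t ∩ Ioc a b = Ioc t b := by
      ext u; simp only [mem_inter_iff, mem_Ioi, mem_Ioc]
      exact ⟨fun ⟨h1, _, h3⟩ => ⟨h1, h3⟩, fun ⟨h1, h2⟩ => ⟨h1, lt_trans ht.1 h1, h2⟩⟩
    rw [hset]
  have h2 : ∀ s ∈ Ioc a b, (∫ t, G (t, s) ∂μ) = ∫ t in Ioc a s, F t s := by
    intro s hs
    have : (fun t => G (t, s)) = (Iio s).indicator (fun t => F t s) := by
      ext t
      by_cases h : t < s <;> simp [hG, Set.indicator, h]
    rw [this, hμ, integral_indicator measurableSet_Iio, Measure.restrict_restrict measurableSet_Iio]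
    have : Iio s ∩ Ioc a b = Ioo a s := by
      ext u; simp only [mem_inter_iff, mem_Iio, mem_Ioc, mem_Ioo]
      constructor
      · rintro ⟨h1, h2, h3⟩; exact ⟨h2, h1⟩
      · rintro ⟨h1, h2⟩; exact ⟨h2, h1, le_trans h2.le hs.2⟩
    rw [this, ← integral_Ioc_eq_integral_Ioo]
  calc ∫ t in Ioc a b, (∫ s in Ioc t b, F t s)
      = ∫ t, (∫ s, G (t, s) ∂μ) ∂μ := by
        rw [hμ]; exact setIntegral_congr_fun measurableSet_Ioc h1
    _ = ∫ s, (∫ t, G (t, s) ∂μ) ∂μ := integral_integral_swap hGi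
    _ = ∫ s in Ioc a b, (∫ t in Ioc a s, F t s) := by
        rw [hμ]; exact setIntegral_congr_fun measurableSet_Ioc h2


variable {E : Type*} [NormedAddCommGroup E] [InnerProductSpace ℝ E] [CompleteSpace E]

/-- continuity of `s ↦ ∫ Ioc s b, g` on `Icc a b` -/
lemma contOn_tail {a b : ℝ} (hab : a ≤ b) {g : ℝ → E} (hgi : IntegrableOn g (Ioc a b)) :
    ContinuousOn (fun s => ∫ u in Ioc s b, g u) (Icc a b) := by
  have h1 : ContinuousOn (fun s => ∫ u in s..b, g u) (Icc a b) := by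
    have := intervalIntegral.continuousOn_primitive_interval_left
      (f := g) (a := a) (b := b) (μ := volume) (by rwa [uIcc_of_le hab, integrableOn_Icc_iff_integrableOn_Ioc])
    rwa [uIcc_of_le hab] at this
  refine ContinuousOn.congr h1 fun s hs => ?_
  rw [intervalIntegral.integral_of_le hs.2]

/-- boundedness of the tail primitive, and integrability of the inner product against it -/
lemma k_integrable {a b : ℝ} (hab : a ≤ b) {g : ℝ → E} (hgi : IntegrableOn g (Ioc a b)) :
    IntegrableOn (fun s => ⟪g s, ∫ u in Ioc s b, g u⟫) (Ioc a b) := by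
  set Φ : ℝ → E := fun s => ∫ u in Ioc s b, g u with hΦ
  have hc : ContinuousOn Φ (Icc a b) := contOn_tail hab hgi
  obtain ⟨C, hC⟩ := (isCompact_Icc (a := a) (b := b)).exists_bound_of_continuousOn hc
  have hΦm : AEStronglyMeasurable Φ (volume.restrict (Ioc a b)) :=
    (hc.aestronglyMeasurable measurableSet_Icc).mono_measure
      (Measure.restrict_mono Ioc_subset_Icc_self le_rfl)
  have hkm : AEStronglyMeasurable (fun s => ⟪g s, Φ s⟫) (volume.restrict (Ioc a b)) :=
    hgi.aestronglyMeasurable.inner hΦm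
  refine Integrable.mono' ((hgi.norm.mul_const C)) hkm ?_
  filter_upwards [ae_restrict_mem measurableSet_Ioc] with s hs
  calc ‖⟪g s, Φ s⟫‖ = |⟪g s, Φ s⟫| := rfl
    _ ≤ ‖g s‖ * ‖Φ s‖ := abs_real_inner_le_norm _ _
    _ ≤ ‖g s‖ * C := by
        have := hC s (Ioc_subset_Icc_self hs)
        exact mul_le_mul_of_nonneg_left this (norm_nonneg _)

/-- Lemma A: the symmetrization identity. -/
lemma inner_tail_half {a b : ℝ} (hab : a ≤ b) {g : ℝ → E} (hgi : IntegrableOn g (Ioc a b)) :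
    ∫ t in Ioc a b, ⟪g t, ∫ s in Ioc t b, g s⟫
      = (1/2) * ‖∫ s in Ioc a b, g s‖^2 := by
  set μ := volume.restrict (Ioc a b) with hμ
  set c : E := ∫ s in Ioc a b, g s with hc
  have hgm := hgi.aestronglyMeasurable
  -- product integrability of the inner product kernel
  have hFm : AEStronglyMeasurable (fun p : ℝ × ℝ => ⟪g p.1, g p.2⟫) (μ.prod μ) :=
    AEStronglyMeasurable.inner hgm.comp_fst hgm.comp_snd
  have hFi : Integrable (fun p : ℝ × ℝ => ⟪g p.1, g p.2⟫) (μ.prod μ) := by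
    refine Integrable.mono' (hgi.norm.mul_prod hgi.norm) hFm ?_
    refine Filter.Eventually.of_forall fun p => ?_
    exact abs_real_inner_le_norm _ _
  -- step 1: pull out the inner product
  have step1 : ∫ t in Ioc a b, ⟪g t, ∫ s in Ioc t b, g s⟫
      = ∫ t in Ioc a b, (∫ s in Ioc t b, ⟪g t, g s⟫) := by
    refine setIntegral_congr_fun measurableSet_Ioc fun t ht => ?_
    exact (integral_inner (hgi.mono_set (Ioc_subset_Ioc_left ht.1.le)) (g t)).symm
  have step2 : ∫ t in Ioc a b, (∫ s in Ioc t b, ⟪g t, g s⟫)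
      = ∫ s in Ioc a b, (∫ t in Ioc a s, ⟪g t, g s⟫) := swap_tri hFi
  have step3 : ∫ s in Ioc a b, (∫ t in Ioc a s, ⟪g t, g s⟫)
      = ∫ s in Ioc a b, ⟪g s, c - ∫ u in Ioc s b, g u⟫ := by
    refine setIntegral_congr_fun measurableSet_Ioc fun s hs => ?_
    have hsplit : c = (∫ t in Ioc a s, g t) + ∫ u in Ioc s b, g u := by
      rw [hc, ← Ioc_union_Ioc_eq_Ioc hs.1.le hs.2]
      exact setIntegral_union (Ioc_disjoint_Ioc_of_le le_rfl) measurableSet_Ioc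
        (hgi.mono_set (Ioc_subset_Ioc_right hs.2)) (hgi.mono_set (Ioc_subset_Ioc_left hs.1.le))
    have : c - (∫ u in Ioc s b, g u) = ∫ t in Ioc a s, g t := by rw [hsplit]; abel
    rw [this]
    calc ∫ t in Ioc a s, ⟪g t, g s⟫ = ∫ t in Ioc a s, ⟪g s, g t⟫ := by
          simp_rw [real_inner_comm]
      _ = ⟪g s, ∫ t in Ioc a s, g t⟫ := integral_inner (hgi.mono_set (Ioc_subset_Ioc_right hs.2)) _
  have hki := k_integrable hab hgi
  have hgc : IntegrableOn (fun s => ⟪g s, c⟫) (Ioc a b) := by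
    refine Integrable.mono' (hgi.norm.mul_const ‖c‖) (hgm.inner aestronglyMeasurable_const) ?_
    exact Filter.Eventually.of_forall fun s => abs_real_inner_le_norm _ _
  have step4 : ∫ s in Ioc a b, ⟪g s, c - ∫ u in Ioc s b, g u⟫
      = (∫ s in Ioc a b, ⟪g s, c⟫) - ∫ s in Ioc a b, ⟪g s, ∫ u in Ioc s b, g u⟫ := by
    have : ∀ s, ⟪g s, c - ∫ u in Ioc s b, g u⟫ = ⟪g s, c⟫ - ⟪g s, ∫ u in Ioc s b, g u⟫ :=
      fun s => inner_sub_right _ _ _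
    rw [integral_congr_ae (Filter.Eventually.of_forall this)]
    exact integral_sub hgc hki
  have step5 : ∫ s in Ioc a b, ⟪g s, c⟫ = ‖c‖^2 := by
    have h : ∀ s, ⟪g s, c⟫ = ⟪c, g s⟫ := fun s => real_inner_comm _ _
    rw [integral_congr_ae (Filter.Eventually.of_forall h), integral_inner hgi c, ← hc,
      real_inner_self_eq_norm_sq]
  have := step1.trans (step2.trans (step3.trans step4))
  rw [step5] at this
  linarith [this]

lemma weight_integral {r : ℝ} (hr0 : 0 ≤ r) (hr1 : r < 1) :
    ∫ t in Ioc 0 r, ((1 - t)^2)⁻¹ = (1 - r)⁻¹ - 1 := by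
  have key : ∀ t ∈ uIcc (0:ℝ) r, HasDerivAt (fun u => (1 - u)⁻¹) ((1 - t)^2)⁻¹ t := by
    intro t ht
    rw [uIcc_of_le hr0] at ht
    have hne : (1 : ℝ) - t ≠ 0 := by
      have := lt_of_le_of_lt ht.2 hr1; linarith
    have h1 : HasDerivAt (fun u : ℝ => 1 - u) (-1) t := by
      simpa using (hasDerivAt_id t).const_sub 1
    have h2 := (hasDerivAt_inv hne).comp t h1
    exact h2.congr_deriv (by ring)
  have hcont : ContinuousOn (fun t : ℝ => ((1 - t)^2)⁻¹) (uIcc 0 r) := by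
    rw [uIcc_of_le hr0]
    refine ContinuousOn.inv₀ (by fun_prop) ?_
    intro t ht
    have h : (0:ℝ) < 1 - t := by have := lt_of_le_of_lt ht.2 hr1; linarith
    positivity
  have hii : IntervalIntegrable (fun t : ℝ => ((1 - t)^2)⁻¹) volume 0 r :=
    hcont.intervalIntegrable
  have := intervalIntegral.integral_eq_sub_of_hasDerivAt key hii
  rw [intervalIntegral.integral_of_le hr0] at this
  rw [this]
  norm_num

lemma swap_tri_mul {a b : ℝ} {w k : ℝ → ℝ} (hwi : IntegrableOn w (Ioc a b))
    (hki : IntegrableOn k (Ioc a b)) :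
    ∫ t in Ioc a b, w t * (∫ s in Ioc t b, k s)
      = ∫ s in Ioc a b, (∫ t in Ioc a s, w t) * k s := by
  have h := swap_tri (F := fun t s => w t * k s) (hwi.mul_prod hki)
  calc ∫ t in Ioc a b, w t * (∫ s in Ioc t b, k s)
      = ∫ t in Ioc a b, (∫ s in Ioc t b, w t * k s) := by
        refine setIntegral_congr_fun measurableSet_Ioc fun t _ => ?_
        rw [integral_const_mul]
    _ = ∫ s in Ioc a b, (∫ t in Ioc a s, w t * k s) := h
    _ = ∫ s in Ioc a b, (∫ t in Ioc a s, w t) * k s := by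
        refine setIntegral_congr_fun measurableSet_Ioc fun s _ => ?_
        rw [integral_mul_const]

variable {E : Type*} [NormedAddCommGroup E] [InnerProductSpace ℝ E] [CompleteSpace E]

/-- Cauchy–Schwarz tail bound. -/
lemma tail_sq_bound {b : ℝ} (hb0 : 0 ≤ b) (hb1 : b < 1) {g : ℝ → E}
    (hg : MemLp g 2 (volume.restrict (Set.Icc (0:ℝ) 1))) :
    (1 - b)⁻¹ * ‖∫ s in Ioc b 1, g s‖^2 ≤ ∫ s in Ioc b 1, ‖g s‖^2 := by
  have hsub : Ioc b 1 ⊆ Icc (0:ℝ) 1 := fun s hs => ⟨le_trans hb0 hs.1.le, hs.2⟩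
  have hres : (volume.restrict (Icc (0:ℝ) 1)).restrict (Ioc b 1) = volume.restrict (Ioc b 1) := by
    rw [Measure.restrict_restrict measurableSet_Ioc, inter_eq_left.mpr hsub]
  have hg2 : MemLp g 2 (volume.restrict (Ioc b 1)) := by
    have := hg.restrict (Ioc b 1); rwa [hres] at this
  have hgi : IntegrableOn g (Ioc b 1) := by
    have : IsFiniteMeasure (volume.restrict (Ioc b (1:ℝ))) :=
      ⟨by rw [Measure.restrict_apply_univ]; exact measure_Ioc_lt_top⟩
    exact hg2.integrable (by norm_num)
  have hgn : MemLp (fun s => ‖g s‖) (ENNReal.ofReal 2) (volume.restrict (Ioc b 1)) := by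
    have h2 : ENNReal.ofReal (2:ℝ) = 2 := by norm_num
    rw [h2]; exact hg2.norm
  have hone : MemLp (fun _ : ℝ => (1:ℝ)) (ENNReal.ofReal 2) (volume.restrict (Ioc b 1)) := by
    have : IsFiniteMeasure (volume.restrict (Ioc b (1:ℝ))) :=
      ⟨by rw [Measure.restrict_apply_univ]; exact measure_Ioc_lt_top⟩
    exact memLp_const 1
  have hconj : Real.HolderConjugate 2 2 := Real.holderConjugate_iff.mpr ⟨one_lt_two, by norm_num⟩
  have hH := integral_mul_le_Lp_mul_Lq_of_nonneg hconj
    (Filter.Eventually.of_forall fun s => norm_nonneg (g s))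
    (Filter.Eventually.of_forall fun _ => zero_le_one) hgn hone
  -- hH : ∫ ‖g s‖ * 1 ≤ (∫ ‖g s‖ ^ (2:ℝ))^(1/2) * (∫ 1 ^ (2:ℝ))^(1/2)
  have hA : ∫ s in Ioc b 1, ‖g s‖ * 1 = ∫ s in Ioc b 1, ‖g s‖ := by simp
  have hone2 : ∫ s in Ioc b 1, (1:ℝ) ^ (2:ℝ) = 1 - b := by
    simp [Real.volume_Ioc, ENNReal.toReal_ofReal (by linarith : (0:ℝ) ≤ 1 - b), hb1.le]
  have hgB : ∀ s, ‖g s‖ ^ (2:ℝ) = ‖g s‖^2 := fun s => by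
    rw [← Real.rpow_natCast ‖g s‖ 2]; norm_num
  simp_rw [hA, hone2, hgB] at hH
  set A := ∫ s in Ioc b 1, ‖g s‖ with hAdef
  set B := ∫ s in Ioc b 1, ‖g s‖^2 with hBdef
  have hBnn : 0 ≤ B := setIntegral_nonneg measurableSet_Ioc fun s _ => sq_nonneg _
  have hAnn : 0 ≤ A := setIntegral_nonneg measurableSet_Ioc fun s _ => norm_nonneg _
  have hΦA : ‖∫ s in Ioc b 1, g s‖ ≤ A := norm_integral_le_integral_norm g
  have h1b : (0:ℝ) < 1 - b := by linarith
  have hsq : A^2 ≤ B * (1 - b) := by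
    have h12 : ∀ x : ℝ, 0 ≤ x → (x ^ ((1:ℝ)/2))^2 = x := by
      intro x hx
      rw [← Real.rpow_natCast (x ^ ((1:ℝ)/2)) 2, ← Real.rpow_mul hx]
      norm_num
    have e1 := h12 B hBnn
    have e2 := h12 (1-b) h1b.le
    have hp1 : 0 ≤ B ^ ((1:ℝ)/2) := Real.rpow_nonneg hBnn _
    have hp2 : 0 ≤ (1-b) ^ ((1:ℝ)/2) := Real.rpow_nonneg h1b.le _
    nlinarith [hH, hAnn]
  have hΦsq : ‖∫ s in Ioc b 1, g s‖^2 ≤ B * (1 - b) := by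
    nlinarith [norm_nonneg (∫ s in Ioc b 1, g s)]
  rw [inv_mul_le_iff₀ h1b]
  nlinarith [hΦsq]

lemma main_piece {g : ℝ → E} (hgi : IntegrableOn g (Ioc 0 1))
    (hg2 : IntegrableOn (fun t => ‖g t‖^2) (Ioc 0 1))
    {b : ℝ} (hb0 : 0 ≤ b) (hb1 : b < 1) :
    ∫ t in Ioc 0 b, ‖g t - (1-t)⁻¹ • (∫ s in Ioc t 1, g s)‖^2
      = (∫ t in Ioc 0 b, ‖g t‖^2) - ‖∫ s in Ioc 0 1, g s‖^2
        + (1-b)⁻¹ * ‖∫ s in Ioc b 1, g s‖^2 := by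
  set Φ : ℝ → E := fun t => ∫ s in Ioc t 1, g s with hΦdef
  set k : ℝ → ℝ := fun s => ⟪g s, Φ s⟫ with hkdef
  set ψ : ℝ → ℝ := fun t => ∫ s in Ioc t 1, k s with hψdef
  set v : ℝ → ℝ := fun t => (1-t)⁻¹ with hvdef
  set w : ℝ → ℝ := fun t => ((1-t)^2)⁻¹ with hwdef
  change ∫ t in Ioc 0 b, ‖g t - (1-t)⁻¹ • Φ t‖^2
      = (∫ t in Ioc 0 b, ‖g t‖^2) - ‖Φ 0‖^2 + (1-b)⁻¹ * ‖Φ b‖^2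
  have hki : IntegrableOn k (Ioc 0 1) := k_integrable zero_le_one hgi
  have hkib : IntegrableOn k (Ioc 0 b) := hki.mono_set (Ioc_subset_Ioc_right hb1.le)
  have hPsiHalf : ∀ t ∈ Icc (0:ℝ) 1, ψ t = (1/2) * ‖Φ t‖^2 := fun t ht =>
    inner_tail_half ht.2 (hgi.mono_set (Ioc_subset_Ioc_left ht.1))
  have hsplitk : ∀ t ∈ Icc (0:ℝ) b, ψ t = (∫ s in Ioc t b, k s) + ψ b := by
    intro t ht
    show (∫ s in Ioc t 1, k s) = _
    rw [← Ioc_union_Ioc_eq_Ioc ht.2 hb1.le]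
    exact setIntegral_union (Ioc_disjoint_Ioc_of_le le_rfl) measurableSet_Ioc
      (hki.mono_set (Ioc_subset_Ioc ht.1 hb1.le))
      (hki.mono_set (Ioc_subset_Ioc_left hb0))
  have hΦc : ContinuousOn Φ (Icc 0 1) := contOn_tail zero_le_one hgi
  have hΦcb : ContinuousOn Φ (Icc 0 b) := hΦc.mono (Icc_subset_Icc le_rfl hb1.le)
  have hne : ∀ t ∈ Icc (0:ℝ) b, (1:ℝ) - t ≠ 0 := by
    intro t ht
    have := lt_of_le_of_lt ht.2 hb1; intro h; linarith
  have hvc : ContinuousOn v (Icc 0 b) := ContinuousOn.inv₀ (by fun_prop) hne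
  have hwc : ContinuousOn w (Icc 0 b) :=
    ContinuousOn.inv₀ (by fun_prop) (fun t ht => pow_ne_zero 2 (hne t ht))
  have i1 : IntegrableOn (fun t => ‖g t‖^2) (Ioc 0 b) :=
    hg2.mono_set (Ioc_subset_Ioc_right hb1.le)
  have hvm : AEStronglyMeasurable v (volume.restrict (Ioc 0 b)) :=
    ((measurable_const.sub measurable_id).inv).aestronglyMeasurable
  have i2 : IntegrableOn (fun t => v t * k t) (Ioc 0 b) := by
    refine Integrable.mono' (hkib.norm.const_mul ((1-b)⁻¹))
      (hvm.mul hkib.aestronglyMeasurable) ?_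
    filter_upwards [ae_restrict_mem measurableSet_Ioc] with t ht
    have h1 : (0:ℝ) < 1 - b := by linarith
    have h2 : 1 - b ≤ 1 - t := by linarith [ht.2]
    have h3 : (0:ℝ) ≤ v t := inv_nonneg.mpr (by linarith [ht.2] : (0:ℝ) ≤ 1 - t)
    calc ‖v t * k t‖ = v t * ‖k t‖ := by
          rw [norm_mul, Real.norm_eq_abs (v t), abs_of_nonneg h3]
      _ ≤ (1-b)⁻¹ * ‖k t‖ := by
          have : v t ≤ (1-b)⁻¹ := by
            show (1-t)⁻¹ ≤ (1-b)⁻¹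
            exact inv_anti₀ h1 h2
          exact mul_le_mul_of_nonneg_right this (norm_nonneg _)
  have i3 : IntegrableOn (fun t => w t * ‖Φ t‖^2) (Ioc 0 b) :=
    ((hwc.mul ((hΦcb.norm).pow 2)).integrableOn_Icc).mono_set Ioc_subset_Icc_self
  have expand : ∀ t ∈ Ioc (0:ℝ) b,
      ‖g t - (1-t)⁻¹ • Φ t‖^2 = ‖g t‖^2 - 2 * (v t * k t) + w t * ‖Φ t‖^2 := by
    intro t ht
    have h1 : (0:ℝ) < 1 - t := by have := ht.2; linarith
    have e : ‖g t - (1-t)⁻¹ • Φ t‖^2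
        = ‖g t‖^2 - 2 * ((1-t)⁻¹ * ⟪g t, Φ t⟫) + ((1-t)^2)⁻¹ * ‖Φ t‖^2 := by
      rw [norm_sub_sq_real, real_inner_smul_right, norm_smul, Real.norm_eq_abs,
        abs_of_nonneg (inv_nonneg.mpr h1.le), mul_pow, inv_pow]
    rw [e]
  rw [setIntegral_congr_fun measurableSet_Ioc expand]
  have i2' : IntegrableOn (fun t => 2*(v t * k t)) (Ioc 0 b) := i2.const_mul 2
  have i12 : IntegrableOn (fun t => ‖g t‖^2 - 2*(v t * k t)) (Ioc 0 b) := i1.sub i2'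
  have isum : ∫ t in Ioc 0 b, (‖g t‖^2 - 2*(v t * k t) + w t * ‖Φ t‖^2)
      = (∫ t in Ioc 0 b, ‖g t‖^2) - 2*(∫ t in Ioc 0 b, v t * k t)
        + ∫ t in Ioc 0 b, w t * ‖Φ t‖^2 := by
    rw [integral_add i12 i3, integral_sub i1 i2', integral_const_mul]
  rw [isum]
  have hwint : IntegrableOn w (Ioc 0 b) := hwc.integrableOn_Icc.mono_set Ioc_subset_Icc_self
  have hS1 : ∀ t ∈ Ioc (0:ℝ) b, w t * ‖Φ t‖^2 = 2 * (w t * ψ t) := by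
    intro t ht
    rw [hPsiHalf t ⟨ht.1.le, le_trans ht.2 hb1.le⟩]; ring
  have hS2 : ∀ t ∈ Ioc (0:ℝ) b, w t * ψ t = w t * (∫ s in Ioc t b, k s) + w t * ψ b := by
    intro t ht; rw [hsplitk t ⟨ht.1.le, ht.2⟩]; ring
  have hkc : ContinuousOn (fun t => ∫ s in Ioc t b, k s) (Icc 0 b) := contOn_tail hb0 hkib
  have i4 : IntegrableOn (fun t => w t * (∫ s in Ioc t b, k s)) (Ioc 0 b) :=
    ((hwc.mul hkc).integrableOn_Icc).mono_set Ioc_subset_Icc_self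
  have S : ∫ t in Ioc 0 b, w t * ‖Φ t‖^2
      = 2 * ((∫ t in Ioc 0 b, w t * (∫ s in Ioc t b, k s)) + (∫ t in Ioc 0 b, w t) * ψ b) := by
    rw [setIntegral_congr_fun measurableSet_Ioc hS1, integral_const_mul]
    congr 1
    rw [setIntegral_congr_fun measurableSet_Ioc hS2,
      integral_add i4 (hwint.mul_const (ψ b)), integral_mul_const]
  have hWs : ∀ s ∈ Ioc (0:ℝ) b, (∫ t in Ioc 0 s, w t) = v s - 1 := by
    intro s hs
    show (∫ t in Ioc 0 s, ((1-t)^2)⁻¹) = (1-s)⁻¹ - 1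
    exact weight_integral hs.1.le (lt_of_le_of_lt hs.2 hb1)
  have hWb : (∫ t in Ioc 0 b, w t) = v b - 1 := by
    show (∫ t in Ioc 0 b, ((1-t)^2)⁻¹) = (1-b)⁻¹ - 1
    exact weight_integral hb0 hb1
  have swap2 : ∫ t in Ioc 0 b, w t * (∫ s in Ioc t b, k s)
      = (∫ s in Ioc 0 b, v s * k s) - ∫ s in Ioc 0 b, k s := by
    rw [swap_tri_mul hwint hkib]
    have h : ∀ s ∈ Ioc (0:ℝ) b, (∫ t in Ioc 0 s, w t) * k s = v s * k s - k s := by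
      intro s hs; rw [hWs s hs]; ring
    rw [setIntegral_congr_fun measurableSet_Ioc h]
    exact integral_sub i2 hkib
  have hk0 : ∫ s in Ioc 0 b, k s = ψ 0 - ψ b := by
    have := hsplitk 0 ⟨le_rfl, hb0⟩
    rw [hψdef] at this
    linarith [this]
  have hψ0 := hPsiHalf 0 ⟨le_rfl, zero_le_one⟩
  have hψb := hPsiHalf b ⟨hb0, hb1.le⟩
  have hvb : v b = (1-b)⁻¹ := rfl
  rw [S, swap2, hWb, hk0, ← hvb]
  rw [hψ0, hψb] at *
  ring

/-- integrability of the integrand -/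
lemma nu_sq_integrable {g : ℝ → E} (hgi : IntegrableOn g (Ioc 0 1))
    (hg2 : IntegrableOn (fun t => ‖g t‖^2) (Ioc 0 1))
    {b : ℝ} (hb0 : 0 ≤ b) (hb1 : b < 1) :
    IntegrableOn (fun t => ‖g t - (1-t)⁻¹ • (∫ s in Ioc t 1, g s)‖^2) (Ioc 0 b) := by
  set Φ : ℝ → E := fun t => ∫ s in Ioc t 1, g s with hΦdef
  set k : ℝ → ℝ := fun s => ⟪g s, Φ s⟫ with hkdef
  set v : ℝ → ℝ := fun t => (1-t)⁻¹ with hvdef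
  set w : ℝ → ℝ := fun t => ((1-t)^2)⁻¹ with hwdef
  have hki : IntegrableOn k (Ioc 0 1) := k_integrable zero_le_one hgi
  have hkib : IntegrableOn k (Ioc 0 b) := hki.mono_set (Ioc_subset_Ioc_right hb1.le)
  have hΦc : ContinuousOn Φ (Icc 0 1) := contOn_tail zero_le_one hgi
  have hΦcb : ContinuousOn Φ (Icc 0 b) := hΦc.mono (Icc_subset_Icc le_rfl hb1.le)
  have hne : ∀ t ∈ Icc (0:ℝ) b, (1:ℝ) - t ≠ 0 := by
    intro t ht
    have := lt_of_le_of_lt ht.2 hb1; intro h; linarith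
  have hwc : ContinuousOn w (Icc 0 b) :=
    ContinuousOn.inv₀ (by fun_prop) (fun t ht => pow_ne_zero 2 (hne t ht))
  have i1 : IntegrableOn (fun t => ‖g t‖^2) (Ioc 0 b) :=
    hg2.mono_set (Ioc_subset_Ioc_right hb1.le)
  have hvm : AEStronglyMeasurable v (volume.restrict (Ioc 0 b)) :=
    ((measurable_const.sub measurable_id).inv).aestronglyMeasurable
  have i2 : IntegrableOn (fun t => v t * k t) (Ioc 0 b) := by
    refine Integrable.mono' (hkib.norm.const_mul ((1-b)⁻¹))
      (hvm.mul hkib.aestronglyMeasurable) ?_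
    filter_upwards [ae_restrict_mem measurableSet_Ioc] with t ht
    have h1 : (0:ℝ) < 1 - b := by linarith
    have h2 : 1 - b ≤ 1 - t := by linarith [ht.2]
    have h3 : (0:ℝ) ≤ v t := inv_nonneg.mpr (by linarith [ht.2] : (0:ℝ) ≤ 1 - t)
    calc ‖v t * k t‖ = v t * ‖k t‖ := by
          rw [norm_mul, Real.norm_eq_abs (v t), abs_of_nonneg h3]
      _ ≤ (1-b)⁻¹ * ‖k t‖ := by
          have : v t ≤ (1-b)⁻¹ := by
            show (1-t)⁻¹ ≤ (1-b)⁻¹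
            exact inv_anti₀ h1 h2
          exact mul_le_mul_of_nonneg_right this (norm_nonneg _)
  have i3 : IntegrableOn (fun t => w t * ‖Φ t‖^2) (Ioc 0 b) :=
    ((hwc.mul ((hΦcb.norm).pow 2)).integrableOn_Icc).mono_set Ioc_subset_Icc_self
  have i2' : IntegrableOn (fun t => 2*(v t * k t)) (Ioc 0 b) := i2.const_mul 2
  have i12 : IntegrableOn (fun t => ‖g t‖^2 - 2*(v t * k t)) (Ioc 0 b) := i1.sub i2'
  have itot : IntegrableOn (fun t => ‖g t‖^2 - 2*(v t * k t) + w t * ‖Φ t‖^2) (Ioc 0 b) :=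
    i12.add i3
  refine itot.congr_fun ?_ measurableSet_Ioc
  intro t ht
  have h1 : (0:ℝ) < 1 - t := by have := ht.2; linarith
  have e : ‖g t - (1-t)⁻¹ • Φ t‖^2
      = ‖g t‖^2 - 2 * ((1-t)⁻¹ * ⟪g t, Φ t⟫) + ((1-t)^2)⁻¹ * ‖Φ t‖^2 := by
    rw [norm_sub_sq_real, real_inner_smul_right, norm_smul, Real.norm_eq_abs,
      abs_of_nonneg (inv_nonneg.mpr h1.le), mul_pow, inv_pow]
  show ‖g t‖^2 - 2*(v t * k t) + w t * ‖Φ t‖^2 = ‖g t - (1-t)⁻¹ • Φ t‖^2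
  rw [e]


end Aux

/-- if `φ : [0,1] → ℝ^d` is absolutely continuous with derivative
`g = φ' ∈ L²([0,1];ℝ^d)`, `φ(0) = x`, `φ(1) = y`, and
`ν(t) := φ'(t) + (φ(t) − y)/(1 − t)`, then `ν ∈ L²([0,1];ℝ^d)` and
`½∫₀¹|ν|² = ½∫₀¹|φ'|² − ½|x−y|²`. -/
theorem bridge_control_energy_identity
    {d : ℕ} (hd : 1 ≤ d) (x y : Euc d) (φ g : ℝ → Euc d)
    (hg : MemLp g 2 (volume.restrict (Set.Icc (0:ℝ) 1)))
    (hφ : ∀ t ∈ Set.Icc (0:ℝ) 1, φ t = x + ∫ s in (0:ℝ)..t, g s)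
    (hy : φ 1 = y) :
    MemLp (fun t => g t + (1 - t)⁻¹ • (φ t - y)) 2 (volume.restrict (Set.Icc (0:ℝ) 1)) ∧
    (1 / 2) * (∫ t in (0:ℝ)..1, ‖g t + (1 - t)⁻¹ • (φ t - y)‖ ^ 2)
      = (1 / 2) * (∫ t in (0:ℝ)..1, ‖g t‖ ^ 2) - (1 / 2) * ‖x - y‖ ^ 2 := by
  have hfin : IsFiniteMeasure (volume.restrict (Icc (0:ℝ) 1)) :=
    ⟨by rw [Measure.restrict_apply_univ]; exact measure_Icc_lt_top⟩
  have hgi1 : IntegrableOn g (Icc 0 1) := hg.integrable one_le_two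
  have hgi : IntegrableOn g (Ioc 0 1) := hgi1.mono_set Ioc_subset_Icc_self
  have hg2Icc : IntegrableOn (fun t => ‖g t‖^2) (Icc 0 1) := by
    have h := hg.integrable_norm_rpow two_ne_zero ENNReal.ofNat_ne_top
    refine h.congr (Filter.Eventually.of_forall fun t => ?_)
    have h2 : ((2:ENNReal)).toReal = ((2:ℕ):ℝ) := by simp
    simp only [h2, Real.rpow_natCast]
  have hg2 : IntegrableOn (fun t => ‖g t‖^2) (Ioc 0 1) := hg2Icc.mono_set Ioc_subset_Icc_self
  -- the bridge representation
  have hII : ∀ a b : ℝ, a ∈ Icc (0:ℝ) 1 → b ∈ Icc (0:ℝ) 1 → IntervalIntegrable g volume a b :=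
    fun a b ha hb => (hgi1.mono_set (uIcc_subset_Icc ha hb)).intervalIntegrable
  have P1 : ∀ t ∈ Icc (0:ℝ) 1, φ t - y = -(∫ s in Ioc t 1, g s) := by
    intro t ht
    have h1 : φ t = x + ∫ s in (0:ℝ)..t, g s := hφ t ht
    have h2 : y = x + ∫ s in (0:ℝ)..1, g s := by
      rw [← hy]; exact hφ 1 (right_mem_Icc.mpr zero_le_one)
    have hadd : (∫ s in (0:ℝ)..t, g s) + (∫ s in t..1, g s) = ∫ s in (0:ℝ)..1, g s :=
      intervalIntegral.integral_add_adjacent_intervals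
        (hII 0 t (left_mem_Icc.mpr zero_le_one) ht) (hII t 1 ht (right_mem_Icc.mpr zero_le_one))
    have h3 : (∫ s in t..1, g s) = ∫ s in Ioc t 1, g s := intervalIntegral.integral_of_le ht.2
    rw [h1, h2, ← hadd, h3]
    abel
  have hν : ∀ t ∈ Icc (0:ℝ) 1,
      g t + (1-t)⁻¹ • (φ t - y) = g t - (1-t)⁻¹ • (∫ s in Ioc t 1, g s) := by
    intro t ht
    rw [P1 t ht, smul_neg, ← sub_eq_add_neg]
  have hΦ0 : (∫ s in Ioc (0:ℝ) 1, g s) = y - x := by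
    have h0 : φ 0 = x := by
      have := hφ 0 (left_mem_Icc.mpr zero_le_one)
      simpa using this
    have h5 := P1 0 (left_mem_Icc.mpr zero_le_one)
    rw [h0] at h5
    have h6 : -(x - y) = ∫ s in Ioc (0:ℝ) 1, g s := by rw [h5, neg_neg]
    rw [← h6]; abel
  -- the approximating sequence
  set b : ℕ → ℝ := fun n => 1 - ((n:ℝ)+1)⁻¹ with hbdef
  have hb0 : ∀ n, 0 ≤ b n := by
    intro n
    have h1 : ((n:ℝ)+1)⁻¹ ≤ 1 := by
      rw [inv_le_one₀ (by positivity)]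
      simp
    simp only [hbdef]; linarith
  have hb1 : ∀ n, b n < 1 := by
    intro n
    have : (0:ℝ) < ((n:ℝ)+1)⁻¹ := by positivity
    simp only [hbdef]; linarith
  have hbt : Tendsto b atTop (𝓝 1) := by
    have h1 : Tendsto (fun n : ℕ => ((n:ℝ)+1)⁻¹) atTop (𝓝 0) :=
      tendsto_one_div_add_atTop_nhds_zero_nat.congr (by intro n; rw [one_div])
    have h2 : Tendsto (fun n : ℕ => 1 - ((n:ℝ)+1)⁻¹) atTop (𝓝 (1 - 0)) :=
      tendsto_const_nhds.sub h1
    simpa using h2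
  -- identity on each Ioc 0 (b n)
  have main : ∀ n, ∫ t in Ioc 0 (b n), ‖g t + (1-t)⁻¹ • (φ t - y)‖^2
      = (∫ t in Ioc 0 (b n), ‖g t‖^2) - ‖x-y‖^2
        + (1-b n)⁻¹ * ‖∫ s in Ioc (b n) 1, g s‖^2 := by
    intro n
    have e1 : ∫ t in Ioc 0 (b n), ‖g t + (1-t)⁻¹ • (φ t - y)‖^2
        = ∫ t in Ioc 0 (b n), ‖g t - (1-t)⁻¹ • (∫ s in Ioc t 1, g s)‖^2 := by
      refine setIntegral_congr_fun measurableSet_Ioc fun t ht => ?_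
      rw [hν t ⟨ht.1.le, le_trans ht.2 (hb1 n).le⟩]
    rw [e1, main_piece hgi hg2 (hb0 n) (hb1 n), hΦ0, norm_sub_rev]
  have hIn : ∀ n, IntegrableOn (fun t => ‖g t + (1-t)⁻¹ • (φ t - y)‖^2) (Ioc 0 (b n)) := by
    intro n
    refine (nu_sq_integrable hgi hg2 (hb0 n) (hb1 n)).congr_fun ?_ measurableSet_Ioc
    intro t ht
    show ‖g t - (1-t)⁻¹ • (∫ s in Ioc t 1, g s)‖^2 = ‖g t + (1-t)⁻¹ • (φ t - y)‖^2
    rw [hν t ⟨ht.1.le, le_trans ht.2 (hb1 n).le⟩]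
  -- splitting of the energy
  have hsplitg : ∀ n, (∫ t in Ioc 0 1, ‖g t‖^2)
      = (∫ t in Ioc 0 (b n), ‖g t‖^2) + ∫ t in Ioc (b n) 1, ‖g t‖^2 := by
    intro n
    rw [← Ioc_union_Ioc_eq_Ioc (hb0 n) (hb1 n).le]
    exact setIntegral_union (Ioc_disjoint_Ioc_of_le le_rfl) measurableSet_Ioc
      (hg2.mono_set (Ioc_subset_Ioc_right (hb1 n).le))
      (hg2.mono_set (Ioc_subset_Ioc_left (hb0 n)))
  have hCS : ∀ n, (1-b n)⁻¹ * ‖∫ s in Ioc (b n) 1, g s‖^2 ≤ ∫ s in Ioc (b n) 1, ‖g s‖^2 :=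
    fun n => tail_sq_bound (hb0 n) (hb1 n) hg
  -- integrability on Ioc 0 1
  have hbound : ∀ n, (∫ t in Ioc 0 (b n), ‖(fun t => ‖g t + (1-t)⁻¹ • (φ t - y)‖^2) t‖)
      ≤ ∫ t in Ioc 0 1, ‖g t‖^2 := by
    intro n
    have e1 : (∫ t in Ioc 0 (b n), ‖(fun t => ‖g t + (1-t)⁻¹ • (φ t - y)‖^2) t‖)
        = ∫ t in Ioc 0 (b n), ‖g t + (1-t)⁻¹ • (φ t - y)‖^2 := by
      refine setIntegral_congr_fun measurableSet_Ioc fun t _ => ?_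
      exact Real.norm_of_nonneg (sq_nonneg _)
    rw [e1, main n]
    have := hCS n
    have hs := hsplitg n
    nlinarith [sq_nonneg ‖x - y‖]
  have hνIoc : IntegrableOn (fun t => ‖g t + (1-t)⁻¹ • (φ t - y)‖^2) (Ioc 0 1) := by
    refine integrableOn_Ioc_of_intervalIntegral_norm_bounded_right hIn hbt
      (Filter.Eventually.of_forall hbound)
  have hνIcc : IntegrableOn (fun t => ‖g t + (1-t)⁻¹ • (φ t - y)‖^2) (Icc 0 1) :=
    hνIoc.congr_set_ae Ioc_ae_eq_Icc.symm
  -- measurability of ν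
  have hΦc : ContinuousOn (fun t => ∫ s in Ioc t 1, g s) (Icc 0 1) := contOn_tail zero_le_one hgi
  have hΦm : AEStronglyMeasurable (fun t => ∫ s in Ioc t 1, g s)
      (volume.restrict (Icc (0:ℝ) 1)) := hΦc.aestronglyMeasurable measurableSet_Icc
  have hvm : AEStronglyMeasurable (fun t : ℝ => (1-t)⁻¹) (volume.restrict (Icc (0:ℝ) 1)) :=
    ((measurable_const.sub measurable_id).inv).aestronglyMeasurable
  have hνm : AEStronglyMeasurable (fun t => g t + (1-t)⁻¹ • (φ t - y))
      (volume.restrict (Icc (0:ℝ) 1)) := by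
    refine AEStronglyMeasurable.congr
      (f := fun t => g t - (1-t)⁻¹ • (∫ s in Ioc t 1, g s)) ?_ ?_
    · exact hg.aestronglyMeasurable.sub (hvm.smul hΦm)
    · filter_upwards [ae_restrict_mem measurableSet_Icc] with t ht
      exact (hν t ht).symm
  have hmem : MemLp (fun t => g t + (1 - t)⁻¹ • (φ t - y)) 2
      (volume.restrict (Set.Icc (0:ℝ) 1)) :=
    (memLp_two_iff_integrable_sq_norm hνm).2 hνIcc
  refine ⟨hmem, ?_⟩
  -- limits
  have hbmono : Monotone b := by
    intro n m hnm
    simp only [hbdef]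
    have : ((m:ℝ)+1)⁻¹ ≤ ((n:ℝ)+1)⁻¹ := by
      apply inv_anti₀ (by positivity)
      have : (n:ℝ) ≤ m := Nat.cast_le.mpr hnm
      linarith
    linarith
  have hmono : Monotone (fun n => Ioc (0:ℝ) (b n)) :=
    fun n m hnm => Ioc_subset_Ioc_right (hbmono hnm)
  have hUnion : ⋃ n, Ioc (0:ℝ) (b n) = Ioo 0 1 := by
    ext t
    simp only [mem_iUnion, mem_Ioc, mem_Ioo]
    constructor
    · rintro ⟨n, h1, h2⟩
      exact ⟨h1, lt_of_le_of_lt h2 (hb1 n)⟩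
    · rintro ⟨h1, h2⟩
      obtain ⟨n, hn⟩ := exists_nat_one_div_lt (by linarith : (0:ℝ) < 1 - t)
      refine ⟨n, h1, ?_⟩
      rw [one_div] at hn
      simp only [hbdef]
      linarith
  have tν : Tendsto (fun n => ∫ t in Ioc 0 (b n), ‖g t + (1-t)⁻¹ • (φ t - y)‖^2)
      atTop (𝓝 (∫ t in Ioc 0 1, ‖g t + (1-t)⁻¹ • (φ t - y)‖^2)) := by
    have h := tendsto_setIntegral_of_monotone (fun n => measurableSet_Ioc) hmono
      (f := fun t => ‖g t + (1-t)⁻¹ • (φ t - y)‖^2) (μ := volume)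
      (by rw [hUnion]; exact hνIoc.mono_set Ioo_subset_Ioc_self)
    rw [hUnion, ← integral_Ioc_eq_integral_Ioo] at h
    exact h
  have tG : Tendsto (fun n => ∫ t in Ioc 0 (b n), ‖g t‖^2)
      atTop (𝓝 (∫ t in Ioc 0 1, ‖g t‖^2)) := by
    have h := tendsto_setIntegral_of_monotone (fun n => measurableSet_Ioc) hmono
      (f := fun t => ‖g t‖^2) (μ := volume)
      (by rw [hUnion]; exact hg2.mono_set Ioo_subset_Ioc_self)
    rw [hUnion, ← integral_Ioc_eq_integral_Ioo] at h
    exact h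
  have tTail : Tendsto (fun n => (1-b n)⁻¹ * ‖∫ s in Ioc (b n) 1, g s‖^2) atTop (𝓝 0) := by
    have hup : Tendsto (fun n => (∫ t in Ioc 0 1, ‖g t‖^2) - ∫ t in Ioc 0 (b n), ‖g t‖^2)
        atTop (𝓝 0) := by
      have h2 : Tendsto (fun n => (∫ t in Ioc 0 1, ‖g t‖^2) - ∫ t in Ioc 0 (b n), ‖g t‖^2)
          atTop (𝓝 ((∫ t in Ioc 0 1, ‖g t‖^2) - ∫ t in Ioc 0 1, ‖g t‖^2)) :=
        tendsto_const_nhds.sub tG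
      simpa using h2
    refine tendsto_of_tendsto_of_tendsto_of_le_of_le tendsto_const_nhds hup ?_ ?_
    · intro n
      have h1 : (0:ℝ) ≤ (1 - b n)⁻¹ := inv_nonneg.mpr (by linarith [hb1 n])
      positivity
    · intro n
      have := hCS n
      have hs := hsplitg n
      linarith
  have tRHS : Tendsto (fun n => (∫ t in Ioc 0 (b n), ‖g t‖^2) - ‖x-y‖^2
      + (1-b n)⁻¹ * ‖∫ s in Ioc (b n) 1, g s‖^2) atTop
      (𝓝 ((∫ t in Ioc 0 1, ‖g t‖^2) - ‖x-y‖^2 + 0)) :=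
    Tendsto.add (tG.sub tendsto_const_nhds) tTail
  have key : (∫ t in Ioc 0 1, ‖g t + (1-t)⁻¹ • (φ t - y)‖^2)
      = (∫ t in Ioc 0 1, ‖g t‖^2) - ‖x-y‖^2 + 0 := by
    refine tendsto_nhds_unique ?_ tRHS
    refine tν.congr fun n => ?_
    exact main n
  rw [intervalIntegral.integral_of_le zero_le_one, intervalIntegral.integral_of_le zero_le_one,
    key]
  ring

end
end

section
/- Let d ≥ 1 and let W be a standard d-dimensional Brownian motion on [0,1] with W₀ = 0. For every δ ∈ (0, 1/2] and ξ > 0, P( there exist s, t ∈ [0,1] with |t − s| ≤ δ and |W_t − W_s| ≥ ξ ) ≤ (4d/δ)·exp( −ξ² / (256·d·δ) ). (The mesh-based modulus-of-continuity tail estimate of Section 3.1, eq. (mesh), in the Brownian case.) -/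
open MeasureTheory ProbabilityTheory Set Filter

noncomputable section

instance (d : ℕ) : MeasurableSpace (PathSp d) := borel _
instance (d : ℕ) : BorelSpace (PathSp d) := ⟨rfl⟩

/-- Standard d-dimensional Brownian motion with `W₀ = 0` and continuous sample paths:
increments are Gaussian (every one-dimensional projection `⟪u, W_t − W_s⟫` has law
`N(0, ‖u‖²(t−s))`) and independent. -/
structure IsBrownianMotion {Ω : Type*} [MeasurableSpace Ω] (P : Measure Ω) {d : ℕ}
    (W : ℝ → Ω → Euc d) : Prop where
  isProb : IsProbabilityMeasure P
  init : ∀ ω, W 0 ω = 0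
  cont : ∀ ω, Continuous fun t => W t ω
  meas : ∀ t, Measurable (W t)
  gauss : ∀ s t : ℝ, 0 ≤ s → s ≤ t → ∀ u : Euc d,
    P.map (fun ω => (inner ℝ u (W t ω - W s ω) : ℝ))
      = gaussianReal 0 ((‖u‖ ^ 2 * (t - s)).toNNReal)
  indep : ∀ n : ℕ, ∀ ts : ℕ → ℝ, Monotone ts → 0 ≤ ts 0 →
    iIndepFun
      (fun i : Fin n => fun ω => W (ts (i + 1)) ω - W (ts i) ω) P

/-- The √η-scaled Brownian bridge from `x` to `y` built from the path `w`:
`t ↦ x + √η (w_t − t w_1) + t (y − x)`. -/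
def bridgePath {d : ℕ} (η : ℝ) (x y : Euc d) (w : ℝ → Euc d) (hw : Continuous w) :
    PathSp d :=
  ⟨fun t => x + Real.sqrt η • (w t - (t : ℝ) • w 1) + (t : ℝ) • (y - x), by
    have h1 : Continuous fun t : Set.Icc (0:ℝ) 1 => (t : ℝ) := continuous_subtype_val
    fun_prop⟩

/-- `φ ∈ C₁` is absolutely continuous with derivative `g ∈ L²([0,1];ℝ^d)`, starts at `x`
and ends at `y`. -/
def IsBridgeDeriv {d : ℕ} (x y : Euc d) (φ : PathSp d) (g : ℝ → Euc d) : Prop :=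
  MemLp g 2 (volume.restrict (Set.Icc (0:ℝ) 1)) ∧
  (∀ t : Set.Icc (0:ℝ) 1, φ t = x + ∫ s in (0:ℝ)..(t : ℝ), g s) ∧
  φ ⟨1, Set.right_mem_Icc.mpr zero_le_one⟩ = y

open scoped NNReal ENNReal

section Gauss

lemma pdf_mul_exp (v : ℝ≥0) (hv : v ≠ 0) (l x : ℝ) :
    Real.exp (l * x) * gaussianPDFReal 0 v x
      = Real.exp (v * l^2 / 2) * gaussianPDFReal (l*v) v x := by
  have hv' : (v:ℝ) ≠ 0 := by exact_mod_cast hv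
  simp only [gaussianPDFReal, sub_zero]
  rw [mul_left_comm, mul_left_comm (Real.exp (v*l^2/2)), ← Real.exp_add, ← Real.exp_add]
  congr 1
  field_simp
  ring

lemma gaussianPDF_eq (v : ℝ≥0) (μ : ℝ) :
    gaussianPDF μ v = fun x => ((Real.toNNReal (gaussianPDFReal μ v x) : ℝ≥0) : ℝ≥0∞) := rfl

lemma meas_toNNReal_pdf (μ : ℝ) (v : ℝ≥0) :
    Measurable (fun x => Real.toNNReal (gaussianPDFReal μ v x)) :=
  (measurable_gaussianPDFReal μ v).real_toNNReal

lemma gaussian_mgf_integrable (v : ℝ≥0) (l : ℝ) :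
    Integrable (fun x => Real.exp (l * x)) (gaussianReal 0 v) := by
  by_cases hv : v = 0
  · subst hv
    rw [gaussianReal_zero_var]
    refine ⟨(Real.continuous_exp.comp (continuous_const.mul continuous_id)).aestronglyMeasurable, ?_⟩
    simp only [HasFiniteIntegral, lintegral_dirac]
    exact ENNReal.coe_lt_top
  · rw [gaussianReal_of_var_ne_zero 0 hv, gaussianPDF_eq,
      integrable_withDensity_iff_integrable_smul (meas_toNNReal_pdf 0 v)]
    have : (fun x => Real.toNNReal (gaussianPDFReal 0 v x) • Real.exp (l * x))
        = fun x => Real.exp (v * l^2/2) * gaussianPDFReal (l*v) v x := by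
      funext x
      rw [NNReal.smul_def, smul_eq_mul, Real.coe_toNNReal _ (gaussianPDFReal_nonneg 0 v x),
        mul_comm, pdf_mul_exp v hv]
    rw [this]
    exact (integrable_gaussianPDFReal (l*v) v).const_mul _

lemma gaussian_mgf (v : ℝ≥0) (l : ℝ) :
    ∫ x, Real.exp (l * x) ∂(gaussianReal 0 v) = Real.exp (v * l^2/2) := by
  by_cases hv : v = 0
  · subst hv
    rw [gaussianReal_zero_var, integral_dirac]
    simp
  · rw [gaussianReal_of_var_ne_zero 0 hv, gaussianPDF_eq,
      integral_withDensity_eq_integral_smul (meas_toNNReal_pdf 0 v)]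
    have : (fun x => Real.toNNReal (gaussianPDFReal 0 v x) • Real.exp (l * x))
        = fun x => Real.exp (v * l^2/2) * gaussianPDFReal (l*v) v x := by
      funext x
      rw [NNReal.smul_def, smul_eq_mul, Real.coe_toNNReal _ (gaussianPDFReal_nonneg 0 v x),
        mul_comm, pdf_mul_exp v hv]
    rw [this, integral_const_mul, integral_gaussianPDFReal_eq_one _ hv, mul_one]

end Gauss

section Core
variable {d : ℕ} {Ω : Type*} [MeasurableSpace Ω] {P : Measure Ω} {W : ℝ → Ω → Euc d}

lemma law_inner (hW : IsBrownianMotion P W) {s t : ℝ} (hs : 0 ≤ s) (hst : s ≤ t)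
    {u : Euc d} (hu : ‖u‖ = 1) :
    P.map (fun ω => (inner ℝ u (W t ω - W s ω) : ℝ)) = gaussianReal 0 (t - s).toNNReal := by
  rw [hW.gauss s t hs hst u, hu]
  norm_num

lemma meas_inner (hW : IsBrownianMotion P W) (u : Euc d) (s t : ℝ) :
    Measurable (fun ω => (inner ℝ u (W t ω - W s ω) : ℝ)) :=
  Measurable.inner measurable_const ((hW.meas t).sub (hW.meas s))

lemma exp_integrable (hW : IsBrownianMotion P W) {s t : ℝ} (hs : 0 ≤ s) (hst : s ≤ t)
    {u : Euc d} (hu : ‖u‖ = 1) (l : ℝ) :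
    Integrable (fun ω => Real.exp (l * (inner ℝ u (W t ω - W s ω) : ℝ))) P := by
  have hm := meas_inner hW u s t
  have hg : AEStronglyMeasurable (fun x : ℝ => Real.exp (l * x))
      (P.map (fun ω => (inner ℝ u (W t ω - W s ω) : ℝ))) :=
    (Real.continuous_exp.comp (continuous_const.mul continuous_id)).aestronglyMeasurable
  have := (integrable_map_measure hg hm.aemeasurable).mp ?_
  · exact this
  · rw [law_inner hW hs hst hu]
    exact gaussian_mgf_integrable _ l

lemma exp_integral (hW : IsBrownianMotion P W) {s t : ℝ} (hs : 0 ≤ s) (hst : s ≤ t)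
    {u : Euc d} (hu : ‖u‖ = 1) (l : ℝ) :
    ∫ ω, Real.exp (l * (inner ℝ u (W t ω - W s ω) : ℝ)) ∂P = Real.exp ((t - s) * l^2 / 2) := by
  have hm := meas_inner hW u s t
  have hg : AEStronglyMeasurable (fun x : ℝ => Real.exp (l * x))
      (P.map (fun ω => (inner ℝ u (W t ω - W s ω) : ℝ))) :=
    (Real.continuous_exp.comp (continuous_const.mul continuous_id)).aestronglyMeasurable
  have key := integral_map (φ := fun ω => (inner ℝ u (W t ω - W s ω) : ℝ))
    (f := fun x : ℝ => Real.exp (l * x)) hm.aemeasurable hg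
  rw [law_inner hW hs hst hu, gaussian_mgf] at key
  rw [show ((t - s) : ℝ) = (((t - s).toNNReal : ℝ)) from
    (Real.coe_toNNReal _ (sub_nonneg.mpr hst)).symm]
  exact key.symm

lemma indep_fun_of (hW : IsBrownianMotion P W) (t : ℕ → ℝ) (ht : Monotone t) (ht0 : 0 ≤ t 0)
    {n k : ℕ} (hkn : k ≤ n) (F : (Fin k → Euc d) → ℝ) (hF : Measurable F)
    (g : Euc d → ℝ) (hg : Measurable g) :
    IndepFun (fun ω => F (fun i : Fin k => W (t (i + 1)) ω - W (t i) ω))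
      (fun ω => g (W (t n) ω - W (t k) ω)) P := by
  classical
  have hind := hW.indep n t ht ht0
  set S : Finset (Fin n) := Finset.univ.filter (fun i : Fin n => (i : ℕ) < k) with hS
  set T : Finset (Fin n) := Finset.univ.filter (fun i : Fin n => k ≤ (i : ℕ)) with hT
  have hdisj : Disjoint S T := by
    rw [Finset.disjoint_left]
    intro i hiS hiT
    simp only [hS, hT, Finset.mem_filter] at hiS hiT
    omega
  have hmeas : ∀ i : Fin n, Measurable (fun ω => W (t ((i : ℕ) + 1)) ω - W (t (i : ℕ)) ω) :=
    fun i => (hW.meas _).sub (hW.meas _)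
  have base := hind.indepFun_finset S T hdisj hmeas
  have hΦ : Measurable (fun y : (i : S) → Euc d =>
      F (fun i : Fin k => y ⟨⟨(i : ℕ), lt_of_lt_of_le i.2 hkn⟩, by
        simp [hS, i.2]⟩)) :=
    hF.comp (measurable_pi_lambda _ fun i => measurable_pi_apply _)
  have hΨ : Measurable (fun y : (i : T) → Euc d => g (∑ i : T, y i)) :=
    hg.comp (Finset.univ.measurable_sum fun i _ => measurable_pi_apply _)
  have res := base.comp hΦ hΨ
  have hsum : ∀ ω, (∑ i : T, (W (t ((i : ℕ) + 1)) ω - W (t (i : ℕ)) ω))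
      = W (t n) ω - W (t k) ω := by
    intro ω
    rw [Finset.sum_coe_sort T (fun i : Fin n => W (t ((i : ℕ) + 1)) ω - W (t (i : ℕ)) ω)]
    rw [Finset.sum_filter, Fin.sum_univ_eq_sum_range
      (fun i : ℕ => if k ≤ i then W (t (i + 1)) ω - W (t i) ω else 0)]
    have : ∀ i ∈ Finset.range n, (if k ≤ i then W (t (i + 1)) ω - W (t i) ω else 0)
        = W (t (max k (i+1))) ω - W (t (max k i)) ω := by
      intro i _
      by_cases hki : k ≤ i
      · rw [if_pos hki, max_eq_right hki, max_eq_right (le_trans hki (Nat.le_succ i))]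
      · rw [if_neg hki, max_eq_left (Nat.succ_le_of_lt (lt_of_not_ge hki)),
          max_eq_left (le_of_lt (lt_of_not_ge hki)), sub_self]
    rw [Finset.sum_congr rfl this, Finset.sum_range_sub (fun i => W (t (max k i)) ω),
      max_eq_right hkn, Nat.max_zero]
  exact res.congr (Filter.EventuallyEq.refl _ _) (Filter.Eventually.of_forall fun ω => by
    simp only [Function.comp_apply]
    rw [hsum ω])

lemma doob_core (hW : IsBrownianMotion P W) (t : ℕ → ℝ) (ht : Monotone t) (ht0 : 0 ≤ t 0)
    (n : ℕ) {h c : ℝ} (hh : 0 < h) (hc : 0 < c) (htn : t n - t 0 ≤ h)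
    {u : Euc d} (hu : ‖u‖ = 1) :
    P {ω | ∃ k ≤ n, c ≤ (inner ℝ u (W (t k) ω - W (t 0) ω) : ℝ)}
      ≤ ENNReal.ofReal (Real.exp (-c^2 / (2*h))) := by
  classical
  haveI : IsProbabilityMeasure P := hW.isProb
  set l : ℝ := c / h with hl
  have hl0 : 0 ≤ l := le_of_lt (div_pos hc hh)
  set X : ℕ → Ω → ℝ := fun k ω => (inner ℝ u (W (t k) ω - W (t 0) ω) : ℝ) with hX
  have hXm : ∀ k, Measurable (X k) := fun k => meas_inner hW u (t 0) (t k)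
  set D : ℕ → Set Ω := fun k => {ω | c ≤ X k ω ∧ ∀ j < k, X j ω < c} with hD
  have hDm : ∀ k, MeasurableSet (D k) := by
    intro k
    have : D k = {ω | c ≤ X k ω} ∩ ⋂ (j : ℕ), ⋂ (_ : j < k), {ω | X j ω < c} := by
      ext ω; simp [hD]
    rw [this]
    exact (measurableSet_le measurable_const (hXm k)).inter
      (MeasurableSet.iInter fun j => MeasurableSet.iInter fun _ =>
        measurableSet_lt (hXm j) measurable_const)
  have hXint : ∀ k, Integrable (fun ω => Real.exp (l * X k ω)) P := fun k =>
    exp_integrable hW ht0 (ht (Nat.zero_le k)) hu l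
  have key : ∀ k, k ≤ n → Real.exp (l * c) * (P (D k)).toReal
      ≤ ∫ ω, Set.indicator (D k) (fun ω => Real.exp (l * X n ω)) ω ∂P := by
    intro k hkn
    have h1 : Real.exp (l * c) * (P (D k)).toReal
        ≤ ∫ ω, Set.indicator (D k) (fun ω => Real.exp (l * X k ω)) ω ∂P := by
      rw [integral_indicator (hDm k)]
      refine (le_of_eq (by rw [measureReal_def, smul_eq_mul, mul_comm])).trans
        (setIntegral_ge_of_const_le (hDm k) (measure_ne_top P _) ?_ ((hXint k).integrableOn))
      intro ω hω
      exact Real.exp_le_exp.mpr (mul_le_mul_of_nonneg_left hω.1 hl0)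
    -- the function of the first k increments
    set Sf : ℕ → (Fin k → Euc d) → ℝ :=
      fun j y => ∑ i : Fin k, if (i : ℕ) < j then (inner ℝ u (y i) : ℝ) else 0 with hSf
    have hSfm : ∀ j, Measurable (Sf j) := by
      intro j
      refine Finset.univ.measurable_sum fun i _ => ?_
      by_cases hij : (i : ℕ) < j
      · simp only [if_pos hij]
        exact Measurable.inner measurable_const (measurable_pi_apply i)
      · simp only [if_neg hij]
        exact measurable_const
    set F : (Fin k → Euc d) → ℝ := fun y =>
      if (c ≤ Sf k y ∧ ∀ j < k, Sf j y < c) then Real.exp (l * Sf k y) else 0 with hF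
    have hFmeas : Measurable F := by
      have hset : MeasurableSet {y : Fin k → Euc d | c ≤ Sf k y ∧ ∀ j < k, Sf j y < c} := by
        have : {y : Fin k → Euc d | c ≤ Sf k y ∧ ∀ j < k, Sf j y < c}
            = {y | c ≤ Sf k y} ∩ ⋂ (j : ℕ), ⋂ (_ : j < k), {y | Sf j y < c} := by
          ext y; simp
        rw [this]
        exact (measurableSet_le measurable_const (hSfm k)).inter
          (MeasurableSet.iInter fun j => MeasurableSet.iInter fun _ =>
            measurableSet_lt (hSfm j) measurable_const)
      exact Measurable.ite hset
        (Real.measurable_exp.comp (measurable_const.mul (hSfm k))) measurable_const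
    have hSf_eval : ∀ j, j ≤ k → ∀ ω,
        Sf j (fun i : Fin k => W (t ((i : ℕ) + 1)) ω - W (t (i : ℕ)) ω) = X j ω := by
      intro j hjk ω
      rw [hSf]
      simp only
      rw [Fin.sum_univ_eq_sum_range
        (fun i : ℕ => if i < j then (inner ℝ u (W (t (i + 1)) ω - W (t i) ω) : ℝ) else 0)]
      rw [← Finset.sum_filter]
      have hfil : (Finset.range k).filter (fun i => i < j) = Finset.range j := by
        ext i; simp only [Finset.mem_filter, Finset.mem_range]; omega
      rw [hfil]
      have hterm : ∀ i, (inner ℝ u (W (t (i + 1)) ω - W (t i) ω) : ℝ) = X (i+1) ω - X i ω := by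
        intro i
        simp only [hX, inner_sub_right]
        ring
      rw [Finset.sum_congr rfl fun i _ => hterm i, Finset.sum_range_sub (fun i => X i ω)]
      have hX0 : X 0 ω = 0 := by simp [hX]
      rw [hX0, sub_zero]
    have hFeval : ∀ ω, F (fun i : Fin k => W (t ((i : ℕ) + 1)) ω - W (t (i : ℕ)) ω)
        = Set.indicator (D k) (fun ω => Real.exp (l * X k ω)) ω := by
      intro ω
      simp only [hF, Set.indicator_apply, hD, Set.mem_setOf_eq]
      rw [hSf_eval k le_rfl ω]
      refine if_congr (and_congr Iff.rfl ?_) rfl rfl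
      exact forall₂_congr fun j hj => by rw [hSf_eval j (le_of_lt hj) ω]
    set g : Euc d → ℝ := fun z => Real.exp (l * (inner ℝ u z : ℝ)) with hg
    have hgmeas : Measurable g :=
      Real.measurable_exp.comp (measurable_const.mul (Measurable.inner measurable_const measurable_id))
    have hind := indep_fun_of hW t ht ht0 hkn F hFmeas g hgmeas
    have hindA : IndepFun (Set.indicator (D k) (fun ω => Real.exp (l * X k ω)))
        (fun ω => g (W (t n) ω - W (t k) ω)) P :=
      hind.congr (Filter.Eventually.of_forall fun ω => hFeval ω) (Filter.EventuallyEq.refl _ _)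
    have hgeval : ∀ ω, g (W (t n) ω - W (t k) ω) = Real.exp (l * (X n ω - X k ω)) := by
      intro ω
      simp only [hg, hX, inner_sub_right]
      congr 1
      ring
    have EB : ∫ ω, g (W (t n) ω - W (t k) ω) ∂P = Real.exp ((t n - t k) * l^2/2) :=
      exp_integral hW (le_trans ht0 (ht (Nat.zero_le k))) (ht hkn) hu l
    have EB1 : 1 ≤ ∫ ω, g (W (t n) ω - W (t k) ω) ∂P := by
      rw [EB]
      calc (1:ℝ) = Real.exp 0 := Real.exp_zero.symm
        _ ≤ _ := Real.exp_le_exp.mpr (by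
            have h0 : (0:ℝ) ≤ t n - t k := sub_nonneg.mpr (ht hkn)
            positivity)
    have hAint : Integrable (Set.indicator (D k) (fun ω => Real.exp (l * X k ω))) P :=
      (hXint k).indicator (hDm k)
    have hAnn : 0 ≤ ∫ ω, Set.indicator (D k) (fun ω => Real.exp (l * X k ω)) ω ∂P :=
      integral_nonneg fun ω => Set.indicator_nonneg (fun a _ => (Real.exp_pos _).le) ω
    have hBmeas : AEStronglyMeasurable (fun ω => g (W (t n) ω - W (t k) ω)) P :=
      (hgmeas.comp ((hW.meas _).sub (hW.meas _))).aestronglyMeasurable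
    have hfact := hindA.integral_mul_eq_mul_integral hAint.1 hBmeas
    have hprod : (fun ω => Set.indicator (D k) (fun ω => Real.exp (l * X k ω)) ω
          * g (W (t n) ω - W (t k) ω))
        = Set.indicator (D k) (fun ω => Real.exp (l * X n ω)) := by
      funext ω
      rw [hgeval ω]
      simp only [Set.indicator_apply]
      by_cases hmem : ω ∈ D k
      · rw [if_pos hmem, if_pos hmem, ← Real.exp_add]
        congr 1
        ring
      · rw [if_neg hmem, if_neg hmem, zero_mul]
    calc Real.exp (l * c) * (P (D k)).toReal
        ≤ ∫ ω, Set.indicator (D k) (fun ω => Real.exp (l * X k ω)) ω ∂P := h1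
      _ ≤ (∫ ω, Set.indicator (D k) (fun ω => Real.exp (l * X k ω)) ω ∂P)
            * ∫ ω, g (W (t n) ω - W (t k) ω) ∂P := le_mul_of_one_le_right hAnn EB1
      _ = ∫ ω, Set.indicator (D k) (fun ω => Real.exp (l * X k ω)) ω
            * g (W (t n) ω - W (t k) ω) ∂P := hfact.symm
      _ = ∫ ω, Set.indicator (D k) (fun ω => Real.exp (l * X n ω)) ω ∂P := by rw [hprod]
  -- global assembly
  set U : Set Ω := ⋃ k ∈ Finset.range (n+1), D k with hU
  have hcover : {ω | ∃ k ≤ n, c ≤ X k ω} ⊆ U := by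
    intro ω hω
    obtain ⟨k, hkn, hk⟩ := hω
    have hex : ∃ m, c ≤ X m ω := ⟨k, hk⟩
    refine Set.mem_biUnion (Finset.mem_range.mpr
      (Nat.lt_succ_of_le (le_trans (Nat.find_min' hex hk) hkn))) ?_
    exact ⟨Nat.find_spec hex, fun j hj => lt_of_not_ge (Nat.find_min hex hj)⟩
  have hpd : (↑(Finset.range (n+1)) : Set ℕ).PairwiseDisjoint D := by
    intro i _ j _ hij
    rw [Function.onFun, Set.disjoint_left]
    intro ω hi hj
    rcases Nat.lt_or_ge i j with hlt | hge
    · exact absurd hi.1 (not_le.mpr (hj.2 i hlt))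
    · have hlt : j < i := lt_of_le_of_ne hge (Ne.symm hij)
      exact absurd hj.1 (not_le.mpr (hi.2 j hlt))
  have hPU : P U = ∑ k ∈ Finset.range (n+1), P (D k) := by
    rw [hU]
    exact measure_biUnion_finset hpd fun k _ => hDm k
  have hPUtoReal : (P U).toReal = ∑ k ∈ Finset.range (n+1), (P (D k)).toReal := by
    rw [hPU, ENNReal.toReal_sum fun k _ => measure_ne_top P _]
  have hptwise : ∀ ω, (∑ k ∈ Finset.range (n+1),
      Set.indicator (D k) (fun ω => Real.exp (l * X n ω)) ω) ≤ Real.exp (l * X n ω) := by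
    intro ω
    by_cases hex : ∃ k ∈ Finset.range (n+1), ω ∈ D k
    · obtain ⟨k0, hk0s, hk0⟩ := hex
      rw [Finset.sum_eq_single k0 (fun b hb hbne => Set.indicator_of_notMem
          (fun hmem => (Set.disjoint_left.mp (hpd hb hk0s hbne) hmem) hk0) _)
          (fun hne => absurd hk0s hne)]
      rw [Set.indicator_of_mem hk0]
    · push_neg at hex
      rw [Finset.sum_eq_zero fun k hk => Set.indicator_of_notMem (hex k hk) _]
      exact (Real.exp_pos _).le
  have hmain : Real.exp (l * c) * (P U).toReal ≤ Real.exp (h * l^2 / 2) := by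
    rw [hPUtoReal, Finset.mul_sum]
    calc ∑ k ∈ Finset.range (n+1), Real.exp (l * c) * (P (D k)).toReal
        ≤ ∑ k ∈ Finset.range (n+1),
            ∫ ω, Set.indicator (D k) (fun ω => Real.exp (l * X n ω)) ω ∂P :=
          Finset.sum_le_sum fun k hk => key k (Nat.lt_succ_iff.mp (Finset.mem_range.mp hk))
      _ = ∫ ω, (∑ k ∈ Finset.range (n+1),
            Set.indicator (D k) (fun ω => Real.exp (l * X n ω)) ω) ∂P :=
          (integral_finset_sum _ fun k _ => (hXint n).indicator (hDm k)).symm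
      _ ≤ ∫ ω, Real.exp (l * X n ω) ∂P :=
          integral_mono (integrable_finset_sum _ fun k _ => (hXint n).indicator (hDm k))
            (hXint n) hptwise
      _ = Real.exp ((t n - t 0) * l^2/2) := exp_integral hW ht0 (ht (Nat.zero_le n)) hu l
      _ ≤ Real.exp (h * l^2 / 2) :=
          Real.exp_le_exp.mpr (by nlinarith [sq_nonneg l])
  have htoReal : (P U).toReal ≤ Real.exp (-c^2 / (2*h)) := by
    have hexp : Real.exp (h * l^2 / 2) / Real.exp (l * c) = Real.exp (-c^2 / (2*h)) := by
      rw [← Real.exp_sub]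
      congr 1
      rw [hl]
      field_simp
      ring
    rw [← hexp, le_div_iff₀ (Real.exp_pos _), mul_comm]
    exact hmain
  calc P {ω | ∃ k ≤ n, c ≤ X k ω} ≤ P U := measure_mono hcover
    _ = ENNReal.ofReal (P U).toReal := (ENNReal.ofReal_toReal (measure_ne_top P _)).symm
    _ ≤ ENNReal.ofReal (Real.exp (-c^2 / (2*h))) := ENNReal.ofReal_le_ofReal htoReal


lemma coord_decomp {d : ℕ} (hd : 1 ≤ d) (v : Euc d) {c' : ℝ} (hc' : 0 < c') (hv : c' ≤ ‖v‖) :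
    ∃ p : Fin d × Bool, c' / Real.sqrt d
      ≤ (inner ℝ ((if p.2 then (1:ℝ) else -1) • EuclideanSpace.single p.1 (1:ℝ)) v : ℝ) := by
  haveI : NeZero d := ⟨by omega⟩
  have hnormsq : ‖v‖^2 = ∑ i : Fin d, v i * v i := by
    rw [← real_inner_self_eq_norm_sq]
    rfl
  have hd0 : (0:ℝ) < d := by exact_mod_cast Nat.pos_of_ne_zero (by omega)
  have hex : ∃ i : Fin d, c'^2 / d ≤ v i * v i := by
    by_contra hcon
    push_neg at hcon
    have hsum : ∑ i : Fin d, v i * v i < ∑ _i : Fin d, c'^2 / d :=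
      Finset.sum_lt_sum_of_nonempty Finset.univ_nonempty fun i _ => hcon i
    rw [Finset.sum_const, Finset.card_univ, Fintype.card_fin, nsmul_eq_mul,
      mul_div_cancel₀ _ (ne_of_gt hd0)] at hsum
    have h2 : c'^2 ≤ ‖v‖^2 := by nlinarith [norm_nonneg v]
    rw [hnormsq] at h2
    linarith
  obtain ⟨i, hi⟩ := hex
  have habs : c' / Real.sqrt d ≤ |v i| := by
    have h1 := Real.sqrt_le_sqrt hi
    rwa [Real.sqrt_div (sq_nonneg c'), Real.sqrt_sq hc'.le,
      Real.sqrt_mul_self_eq_abs] at h1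
  rcases le_or_gt 0 (v i) with hpos | hneg
  · refine ⟨(i, true), ?_⟩
    have : (inner ℝ ((if (true:Bool) then (1:ℝ) else -1) • EuclideanSpace.single i (1:ℝ)) v : ℝ)
        = v i := by
      simp [real_inner_smul_left, EuclideanSpace.inner_single_left]
    rw [this]
    rwa [abs_of_nonneg hpos] at habs
  · refine ⟨(i, false), ?_⟩
    have : (inner ℝ ((if (false:Bool) then (1:ℝ) else -1) • EuclideanSpace.single i (1:ℝ)) v : ℝ)
        = -(v i) := by
      simp [real_inner_smul_left, EuclideanSpace.inner_single_left]
    rw [this]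
    rwa [abs_of_neg hneg] at habs

lemma finite_norm_bound (hd : 1 ≤ d) (hW : IsBrownianMotion P W)
    (t : ℕ → ℝ) (ht : Monotone t) (ht0 : 0 ≤ t 0)
    (n : ℕ) {h c' : ℝ} (hh : 0 < h) (hc' : 0 < c') (htn : t n - t 0 ≤ h) :
    P {ω | ∃ k ≤ n, c' ≤ ‖W (t k) ω - W (t 0) ω‖}
      ≤ ENNReal.ofReal (2 * d * Real.exp (-c'^2 / (2 * d * h))) := by
  classical
  have hd0 : (0:ℝ) < d := by exact_mod_cast Nat.pos_of_ne_zero (by omega)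
  have hsd : (0:ℝ) < Real.sqrt d := Real.sqrt_pos.mpr hd0
  set u : Fin d × Bool → Euc d :=
    fun p => (if p.2 then (1:ℝ) else -1) • EuclideanSpace.single p.1 (1:ℝ) with hu
  have hunorm : ∀ p, ‖u p‖ = 1 := by
    intro p
    rw [hu]
    simp only [norm_smul, EuclideanSpace.norm_single, norm_one, mul_one]
    rcases p.2 with _ | _ <;> simp
  have hsub : {ω | ∃ k ≤ n, c' ≤ ‖W (t k) ω - W (t 0) ω‖}
      ⊆ ⋃ p : Fin d × Bool,
        {ω | ∃ k ≤ n, c' / Real.sqrt d ≤ (inner ℝ (u p) (W (t k) ω - W (t 0) ω) : ℝ)} := by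
    intro ω hω
    obtain ⟨k, hkn, hk⟩ := hω
    obtain ⟨p, hp⟩ := coord_decomp hd (W (t k) ω - W (t 0) ω) hc' hk
    exact Set.mem_iUnion.mpr ⟨p, ⟨k, hkn, hp⟩⟩
  calc P {ω | ∃ k ≤ n, c' ≤ ‖W (t k) ω - W (t 0) ω‖}
      ≤ P (⋃ p : Fin d × Bool,
          {ω | ∃ k ≤ n, c' / Real.sqrt d ≤ (inner ℝ (u p) (W (t k) ω - W (t 0) ω) : ℝ)}) :=
        measure_mono hsub
    _ ≤ ∑ p : Fin d × Bool, P {ω | ∃ k ≤ n,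
          c' / Real.sqrt d ≤ (inner ℝ (u p) (W (t k) ω - W (t 0) ω) : ℝ)} :=
        measure_iUnion_fintype_le _ _
    _ ≤ ∑ _p : Fin d × Bool, ENNReal.ofReal (Real.exp (-(c' / Real.sqrt d)^2 / (2*h))) :=
        Finset.sum_le_sum fun p _ =>
          doob_core hW t ht ht0 n hh (div_pos hc' hsd) htn (hunorm p)
    _ = (2 * d : ℕ) * ENNReal.ofReal (Real.exp (-(c' / Real.sqrt d)^2 / (2*h))) := by
        rw [Finset.sum_const, Finset.card_univ, Fintype.card_prod, Fintype.card_fin,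
          Fintype.card_bool, nsmul_eq_mul]
        norm_num
        ring
    _ = ENNReal.ofReal (2 * d * Real.exp (-c'^2 / (2 * d * h))) := by
        have hexp : (-(c' / Real.sqrt d)^2 / (2*h)) = -c'^2 / (2 * d * h) := by
          rw [div_pow, Real.sq_sqrt hd0.le]
          field_simp
        rw [hexp, ← ENNReal.ofReal_natCast (2*d), ← ENNReal.ofReal_mul (by positivity)]
        congr 1
        push_cast
        ring


lemma countable_bound (hd : 1 ≤ d) (hW : IsBrownianMotion P W)
    {a h c' : ℝ} (ha : 0 ≤ a) (hh : 0 < h) (hc' : 0 < c')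
    (e : ℕ → ℝ) (he : ∀ m, e m ∈ Set.Icc a (a + h)) :
    P {ω | ∃ m : ℕ, c' ≤ ‖W (e m) ω - W a ω‖}
      ≤ ENNReal.ofReal (2 * d * Real.exp (-c'^2 / (2 * d * h))) := by
  classical
  set C : ℕ → Set Ω := fun m => {ω | c' ≤ ‖W (e m) ω - W a ω‖} with hC
  set V : ℕ → Set Ω := fun m => ⋃ i ∈ Finset.range (m+1), C i with hV
  have hVmono : Monotone V := by
    intro m m' hmm'
    refine Set.iUnion₂_subset fun i hi => ?_
    exact Set.subset_biUnion_of_mem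
      (Finset.mem_range.mpr (lt_of_lt_of_le (Finset.mem_range.mp hi) (by omega)))
  have hEU : {ω | ∃ m : ℕ, c' ≤ ‖W (e m) ω - W a ω‖} = ⋃ m, V m := by
    ext ω
    simp only [Set.mem_setOf_eq, Set.mem_iUnion, hV, hC]
    constructor
    · rintro ⟨m, hm⟩
      exact ⟨m, ⟨m, Finset.self_mem_range_succ m, hm⟩⟩
    · rintro ⟨m, i, _, hi⟩
      exact ⟨i, hi⟩
  have hbound : ∀ m, P (V m) ≤ ENNReal.ofReal (2 * d * Real.exp (-c'^2 / (2 * d * h))) := by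
    intro m
    set F : Finset ℝ := insert a (Finset.image e (Finset.range (m+1))) with hF
    have haF : a ∈ F := Finset.mem_insert_self _ _
    have hFlb : ∀ x ∈ F, a ≤ x := by
      intro x hx
      rcases Finset.mem_insert.mp hx with rfl | hx
      · exact le_rfl
      · obtain ⟨i, _, rfl⟩ := Finset.mem_image.mp hx
        exact (he i).1
    have hFub : ∀ x ∈ F, x ≤ a + h := by
      intro x hx
      rcases Finset.mem_insert.mp hx with rfl | hx
      · linarith
      · obtain ⟨i, _, rfl⟩ := Finset.mem_image.mp hx
        exact (he i).2
    set l : List ℝ := F.sort (· ≤ ·) with hl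
    have hlen : 0 < l.length := by
      rw [hl, Finset.length_sort]
      exact Finset.card_pos.mpr ⟨a, haF⟩
    set τ : ℕ → ℝ := fun k => l.getD k (a + h) with hτ
    have hmeml : ∀ x : ℝ, x ∈ l ↔ x ∈ F := fun x => Finset.mem_sort _
    have hsorted : List.Pairwise (· ≤ ·) l := Finset.pairwise_sort (s := F) (r := (· ≤ ·))
    have hτmemF : ∀ k, k < l.length → τ k ∈ F := by
      intro k hk
      rw [hτ]
      simp only
      rw [List.getD_eq_getElem _ _ hk]
      exact (hmeml _).mp (List.getElem_mem _)
    have hτmono : Monotone τ := by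
      intro i j hij
      rcases lt_or_ge j l.length with hj | hj
      · have hi : i < l.length := lt_of_le_of_lt hij hj
        rw [hτ]
        simp only
        rw [List.getD_eq_getElem _ _ hi, List.getD_eq_getElem _ _ hj]
        exact hsorted.rel_get_of_le (a := ⟨i, hi⟩) (b := ⟨j, hj⟩) (by exact_mod_cast hij)
      · rcases lt_or_ge i l.length with hi | hi
        · have h1 : τ i ≤ a + h := hFub _ (hτmemF i hi)
          have h2 : τ j = a + h := by
            rw [hτ]
            simp only
            rw [List.getD_eq_default _ _ hj]
          rw [h2]
          exact h1
        · rw [hτ]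
          simp only
          rw [List.getD_eq_default _ _ hi, List.getD_eq_default _ _ (le_trans hi hij)]
    have hτ0 : τ 0 = a := by
      have h1 : a ≤ τ 0 := hFlb _ (hτmemF 0 hlen)
      obtain ⟨k, hk, hkl⟩ := List.mem_iff_getElem.mp ((hmeml a).mpr haF)
      have h2 : τ 0 ≤ τ k := hτmono (Nat.zero_le k)
      have hτk : τ k = a := by
        rw [hτ]
        simp only
        rw [List.getD_eq_getElem _ _ hk]
        exact hkl
      exact le_antisymm (hτk ▸ h2) h1
    have hτlen : τ l.length = a + h := by
      rw [hτ]
      simp only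
      rw [List.getD_eq_default _ _ le_rfl]
    have hsub : V m ⊆ {ω | ∃ k ≤ l.length, c' ≤ ‖W (τ k) ω - W (τ 0) ω‖} := by
      intro ω hω
      obtain ⟨i, hi, hωi⟩ := Set.mem_iUnion₂.mp hω
      have heiF : e i ∈ F :=
        Finset.mem_insert_of_mem (Finset.mem_image.mpr ⟨i, hi, rfl⟩)
      obtain ⟨k, hk, hkl⟩ := List.mem_iff_getElem.mp ((hmeml _).mpr heiF)
      refine ⟨k, le_of_lt hk, ?_⟩
      have hτk : τ k = e i := by
        rw [hτ]
        simp only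
        rw [List.getD_eq_getElem _ _ hk]
        exact hkl
      rw [hτk, hτ0]
      exact hωi
    calc P (V m) ≤ P {ω | ∃ k ≤ l.length, c' ≤ ‖W (τ k) ω - W (τ 0) ω‖} :=
        measure_mono hsub
      _ ≤ ENNReal.ofReal (2 * d * Real.exp (-c'^2 / (2 * d * h))) :=
        finite_norm_bound hd hW τ hτmono (by rw [hτ0]; exact ha) l.length hh hc'
          (by rw [hτlen, hτ0]; linarith)
  rw [hEU, Directed.measure_iUnion hVmono.directed_le]
  exact iSup_le hbound


lemma rational_approx {ω : Ω} (hcont : Continuous fun r => W r ω)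
    {a b u ξ : ℝ} (hab : a < b) (hu : u ∈ Set.Icc a b) (hξ : 0 < ξ)
    (hval : ξ/2 ≤ ‖W u ω - W a ω‖) :
    ∃ q : ℚ, (q:ℝ) ∈ Set.Icc a b ∧ ξ/4 ≤ ‖W (q:ℝ) ω - W a ω‖ := by
  set f : ℝ → ℝ := fun r => ‖W r ω - W a ω‖ with hf
  have hfc : Continuous f := (hcont.sub continuous_const).norm
  have hfu : f u ∈ Set.Ioi (ξ/4) := lt_of_lt_of_le (by linarith) hval
  have hopen : IsOpen (f ⁻¹' Set.Ioi (ξ/4)) := isOpen_Ioi.preimage hfc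
  obtain ⟨ε, hε, hball⟩ := Metric.isOpen_iff.mp hopen u hfu
  have hlt : max a (u - ε) < min b (u + ε) := by
    obtain ⟨h1, h2⟩ := hu
    apply max_lt <;> apply lt_min <;> linarith
  obtain ⟨q, hq1, hq2⟩ := exists_rat_btwn hlt
  have hqball : (q:ℝ) ∈ Metric.ball u ε := by
    rw [Real.ball_eq_Ioo]
    exact ⟨lt_of_le_of_lt (le_max_right a (u - ε)) hq1,
      lt_of_lt_of_le hq2 (min_le_right b (u + ε))⟩
  refine ⟨q, ⟨le_of_lt (lt_of_le_of_lt (le_max_left _ _) hq1),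
    le_of_lt (lt_of_lt_of_le hq2 (min_le_left _ _))⟩, ?_⟩
  exact le_of_lt (hball hqball)


end Core

/-- the mesh-based modulus-of-continuity tail estimate for Brownian motion:
for `δ ∈ (0, 1/2]` and `ξ > 0`,
`P(∃ s,t ∈ [0,1], |t−s| ≤ δ and |W_t − W_s| ≥ ξ) ≤ (4d/δ)·exp(−ξ²/(256 d δ))`. -/
theorem brownian_modulus_tail_estimate
    {d : ℕ} (hd : 1 ≤ d) {Ω : Type*} [MeasurableSpace Ω] (P : Measure Ω)
    (W : ℝ → Ω → Euc d) (hW : IsBrownianMotion P W)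
    (δ ξ : ℝ) (hδ : δ ∈ Set.Ioc (0:ℝ) (1/2)) (hξ : 0 < ξ) :
    P {ω | ∃ s ∈ Set.Icc (0:ℝ) 1, ∃ t ∈ Set.Icc (0:ℝ) 1,
        |t - s| ≤ δ ∧ ξ ≤ ‖W t ω - W s ω‖}
      ≤ ENNReal.ofReal ((4 * d / δ) * Real.exp (-ξ ^ 2 / (256 * d * δ))) := by
  classical
  obtain ⟨hδ0, hδ2⟩ := hδ
  haveI : IsProbabilityMeasure P := hW.isProb
  have hd0 : (0:ℝ) < d := by exact_mod_cast Nat.pos_of_ne_zero (by omega)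
  set N : ℕ := ⌈1/δ⌉₊ with hN
  have hN1 : 1 ≤ N := Nat.one_le_iff_ne_zero.mpr (by
    intro h0
    have := Nat.ceil_eq_zero.mp h0
    have h1 : (0:ℝ) < 1/δ := by positivity
    linarith)
  have hNδ : 1 ≤ (N:ℝ) * δ := by
    have h1 := Nat.le_ceil (1/δ)
    have h2 : (1/δ) * δ ≤ (N:ℝ) * δ := mul_le_mul_of_nonneg_right h1 hδ0.le
    calc (1:ℝ) = (1/δ) * δ := by field_simp
      _ ≤ (N:ℝ) * δ := h2
  have hNle : (N:ℝ) ≤ 2/δ := by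
    have h1 : (N:ℝ) < 1/δ + 1 := Nat.ceil_lt_add_one (by positivity)
    have h2 : (1:ℝ) ≤ 1/δ := by
      rw [le_div_iff₀ hδ0]
      linarith
    have h3 : (1:ℝ)/δ + 1/δ = 2/δ := by ring
    linarith
  set r : ℕ → ℚ := fun m => (Denumerable.eqv ℚ).symm m with hr
  have hrsurj : Function.Surjective r := (Denumerable.eqv ℚ).symm.surjective
  set ej : ℕ → ℕ → ℝ := fun j m =>
    if ((r m : ℝ)) ∈ Set.Icc ((j:ℝ)*δ) ((j:ℝ)*δ + 2*δ) then (r m : ℝ) else (j:ℝ)*δ with hej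
  have hejmem : ∀ (j m : ℕ), ej j m ∈ Set.Icc ((j:ℝ)*δ) ((j:ℝ)*δ + 2*δ) := by
    intro j m
    rw [hej]
    simp only
    split_ifs with hmem
    · exact hmem
    · exact ⟨le_rfl, by linarith⟩
  set B : ℕ → Set Ω := fun j => {ω | ∃ m : ℕ, ξ/4 ≤ ‖W (ej j m) ω - W ((j:ℝ)*δ) ω‖} with hB
  have hcover : {ω | ∃ s ∈ Set.Icc (0:ℝ) 1, ∃ t ∈ Set.Icc (0:ℝ) 1,
      |t - s| ≤ δ ∧ ξ ≤ ‖W t ω - W s ω‖} ⊆ ⋃ j ∈ Finset.range N, B j := by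
    intro ω hω
    obtain ⟨s, hs, t, ht, hts, hval⟩ := hω
    obtain ⟨s', t', hs', ht', hst', hts', hval'⟩ :
        ∃ s' t', s' ∈ Set.Icc (0:ℝ) 1 ∧ t' ∈ Set.Icc (0:ℝ) 1 ∧ s' ≤ t' ∧ t' - s' ≤ δ ∧
          ξ ≤ ‖W t' ω - W s' ω‖ := by
      rcases le_total s t with hle | hle
      · exact ⟨s, t, hs, ht, hle, by rwa [abs_of_nonneg (by linarith)] at hts, hval⟩
      · refine ⟨t, s, ht, hs, hle, ?_, ?_⟩
        · rwa [abs_of_nonpos (by linarith), neg_sub] at hts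
        · rwa [norm_sub_rev]
    clear hval hts hs ht
    set j : ℕ := min ⌊s'/δ⌋₊ (N-1) with hj
    have hjN : j < N := by omega
    set A : ℝ := (j:ℝ)*δ with hA
    have hA0 : 0 ≤ A := by positivity
    have hfloor_le : (⌊s'/δ⌋₊:ℝ) * δ ≤ s' := by
      have h1 : (⌊s'/δ⌋₊:ℝ) ≤ s'/δ := Nat.floor_le (div_nonneg hs'.1 hδ0.le)
      calc (⌊s'/δ⌋₊:ℝ) * δ ≤ (s'/δ) * δ := mul_le_mul_of_nonneg_right h1 hδ0.le
        _ = s' := by field_simp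
    have hAs : A ≤ s' := by
      rcases le_or_gt ⌊s'/δ⌋₊ (N-1) with hcase | hcase
      · have hjf : j = ⌊s'/δ⌋₊ := min_eq_left hcase
        rw [hA, hjf]
        exact hfloor_le
      · have hjf : j = N - 1 := min_eq_right (le_of_lt hcase)
        have hle2 : (N - 1 : ℕ) ≤ ⌊s'/δ⌋₊ := by omega
        have h2 : ((N-1:ℕ):ℝ) * δ ≤ (⌊s'/δ⌋₊:ℝ) * δ :=
          mul_le_mul_of_nonneg_right (by exact_mod_cast hle2) hδ0.le
        rw [hA, hjf]
        linarith
    have hAt : t' ≤ A + 2*δ := by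
      rcases le_or_gt ⌊s'/δ⌋₊ (N-1) with hcase | hcase
      · have hjf : j = ⌊s'/δ⌋₊ := min_eq_left hcase
        have h1 : s' < ((⌊s'/δ⌋₊:ℝ) + 1) * δ := by
          have h2 : s'/δ < (⌊s'/δ⌋₊:ℝ) + 1 := Nat.lt_floor_add_one _
          calc s' = (s'/δ) * δ := by field_simp
            _ < ((⌊s'/δ⌋₊:ℝ) + 1) * δ := by
                apply mul_lt_mul_of_pos_right h2 hδ0
        rw [hA, hjf]
        linarith
      · have hjf : j = N - 1 := min_eq_right (le_of_lt hcase)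
        have hcast : ((N-1:ℕ):ℝ) = (N:ℝ) - 1 := by
          push_cast [Nat.cast_sub hN1]
          ring
        rw [hA, hjf, hcast]
        have h1 : t' ≤ 1 := ht'.2
        nlinarith
    have hsI : s' ∈ Set.Icc A (A+2*δ) := ⟨hAs, by linarith⟩
    have htI : t' ∈ Set.Icc A (A+2*δ) := ⟨le_trans hAs hst', hAt⟩
    have htri : ξ/2 ≤ ‖W t' ω - W A ω‖ ∨ ξ/2 ≤ ‖W s' ω - W A ω‖ := by
      by_contra hcon
      push_neg at hcon
      have hsplit : ‖W t' ω - W s' ω‖ ≤ ‖W t' ω - W A ω‖ + ‖W s' ω - W A ω‖ := by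
        have h1 := norm_sub_le (W t' ω - W A ω) (W s' ω - W A ω)
        have h2 : (W t' ω - W A ω) - (W s' ω - W A ω) = W t' ω - W s' ω := by abel
        rwa [h2] at h1
      obtain ⟨hc1, hc2⟩ := hcon
      linarith
    have hkey : ∃ q : ℚ, (q:ℝ) ∈ Set.Icc A (A+2*δ) ∧ ξ/4 ≤ ‖W (q:ℝ) ω - W A ω‖ := by
      rcases htri with hu | hu
      · exact rational_approx (hW.cont ω) (by linarith) htI hξ hu
      · exact rational_approx (hW.cont ω) (by linarith) hsI hξ hu
    obtain ⟨q, hqI, hqval⟩ := hkey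
    obtain ⟨m, hm⟩ := hrsurj q
    refine Set.mem_biUnion (Finset.mem_range.mpr hjN) ?_
    refine ⟨m, ?_⟩
    have hejq : ej j m = (q:ℝ) := by
      rw [hej]
      simp only [hm]
      rw [if_pos]
      exact hqI
    rw [hejq]
    exact hqval
  have hBbound : ∀ j, P (B j)
      ≤ ENNReal.ofReal (2*d*Real.exp (-(ξ/4)^2/(2*d*(2*δ)))) := by
    intro j
    exact countable_bound hd hW (by positivity) (by linarith) (by positivity)
      (ej j) (hejmem j)
  calc P {ω | ∃ s ∈ Set.Icc (0:ℝ) 1, ∃ t ∈ Set.Icc (0:ℝ) 1,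
        |t - s| ≤ δ ∧ ξ ≤ ‖W t ω - W s ω‖}
      ≤ P (⋃ j ∈ Finset.range N, B j) := measure_mono hcover
    _ ≤ ∑ j ∈ Finset.range N, P (B j) := measure_biUnion_finset_le _ _
    _ ≤ ∑ _j ∈ Finset.range N, ENNReal.ofReal (2*d*Real.exp (-(ξ/4)^2/(2*d*(2*δ)))) :=
        Finset.sum_le_sum fun j _ => hBbound j
    _ = (N:ℝ≥0∞) * ENNReal.ofReal (2*d*Real.exp (-(ξ/4)^2/(2*d*(2*δ)))) := by
        rw [Finset.sum_const, Finset.card_range, nsmul_eq_mul]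
    _ ≤ ENNReal.ofReal ((4 * d / δ) * Real.exp (-ξ ^ 2 / (256 * d * δ))) := by
        rw [← ENNReal.ofReal_natCast N, ← ENNReal.ofReal_mul (Nat.cast_nonneg N)]
        apply ENNReal.ofReal_le_ofReal
        have hexp : Real.exp (-(ξ/4)^2/(2*d*(2*δ))) ≤ Real.exp (-ξ^2/(256*d*δ)) := by
          apply Real.exp_le_exp.mpr
          have he1 : -(ξ/4)^2/(2*(d:ℝ)*(2*δ)) = -(ξ^2/(64*d*δ)) := by
            field_simp
            ring
          have he2 : ξ^2/(256*(d:ℝ)*δ) ≤ ξ^2/(64*d*δ) := by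
            apply div_le_div_of_nonneg_left (sq_nonneg ξ) (by positivity)
            nlinarith
          rw [he1]
          have : -ξ^2/(256*(d:ℝ)*δ) = -(ξ^2/(256*d*δ)) := by ring
          rw [this]
          linarith
        calc (N:ℝ) * (2*d*Real.exp (-(ξ/4)^2/(2*d*(2*δ))))
            ≤ (2/δ) * (2*d*Real.exp (-(ξ/4)^2/(2*d*(2*δ)))) :=
              mul_le_mul_of_nonneg_right hNle (by positivity)
          _ = (4*d/δ) * Real.exp (-(ξ/4)^2/(2*d*(2*δ))) := by ring
          _ ≤ (4*d/δ) * Real.exp (-ξ^2/(256*d*δ)) :=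
              mul_le_mul_of_nonneg_left hexp (by positivity)
end
end
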